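/- arXiv:1804.00221 — 6 statements merged into one kernel-verified Lean document; each statement's English description precedes it below -/
import Mathlib

section
/- Let b ≥ 5 be an integer and a = r/s with r, s coprime positive integers, 1 < r/s < b, and log_b a irrational. Then the cardinality of the set L ∩ (L − α) in R/Z equals ⌊(b−1)/r⌋ + ⌊(gcd(b,r)−1)/s⌋, where L = {log_b 1, ..., log_b(b−1)} and α = log_b(r/s). -/
open Real

private lemma aux_logb_zpow {b : ℝ} (hb1 : 1 < b) (k : ℤ) : Real.logb b (b ^ k) = k := by
  have : Real.log b ≠ 0 := by have := Real.log_pos hb1; linarith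
  rw [Real.logb, Real.log_zpow, mul_div_assoc, div_self this, mul_one]

private lemma aux_diff_of_eq {b : ℝ} (hb1 : 1 < b) {x y : ℝ} (hy : 0 < y) (k : ℤ)
    (h : x = y * b ^ k) : Real.logb b x - Real.logb b y = k := by
  have hb0 : (0:ℝ) < b := by linarith
  have hbk : (0:ℝ) < b ^ k := zpow_pos hb0 k
  rw [h, Real.logb_mul (by positivity) (by positivity), aux_logb_zpow hb1]; ring

private lemma aux_eq_of_diff {b : ℝ} (hb1 : 1 < b) {x y : ℝ} (hx : 0 < x) (hy : 0 < y) (k : ℤ)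
    (h : Real.logb b x - Real.logb b y = k) : x = y * b ^ k := by
  have hb0 : (0:ℝ) < b := by linarith
  have h2 : Real.logb b (x / y) = k := by rw [Real.logb_div hx.ne' hy.ne']; exact h
  have h3 : b ^ (Real.logb b (x/y)) = x / y := Real.rpow_logb hb0 (by linarith) (by positivity)
  rw [h2, Real.rpow_intCast] at h3
  field_simp at h3 ⊢
  linarith [h3]

private lemma aux_AC_eq_iff (x y : ℝ) : ((x : UnitAddCircle) = y) ↔ ∃ k : ℤ, x - y = k := by
  rw [QuotientAddGroup.eq_iff_sub_mem, AddSubgroup.mem_zmultiples_iff]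
  constructor
  · rintro ⟨k, hk⟩; exact ⟨k, by simpa [eq_comm] using hk⟩
  · rintro ⟨k, hk⟩; exact ⟨k, by simp [hk]⟩

private lemma aux_AC_inj {x y : ℝ} (hx : x ∈ Set.Ico (0:ℝ) 1) (hy : y ∈ Set.Ico (0:ℝ) 1)
    (h : (x : UnitAddCircle) = y) : x = y := by
  obtain ⟨k, hk⟩ := (aux_AC_eq_iff x y).mp h
  have h1 : -1 < (k:ℝ) := by obtain ⟨a,b⟩ := hx; obtain ⟨c,d⟩ := hy; linarith
  have h2 : (k:ℝ) < 1 := by obtain ⟨a,b⟩ := hx; obtain ⟨c,d⟩ := hy; linarith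
  have : k = 0 := by
    have h1' : -1 < k := by exact_mod_cast h1
    have h2' : k < 1 := by exact_mod_cast h2
    omega
  rw [this] at hk; push_cast at hk; linarith

private lemma aux_logb_mem {b d : ℕ} (hb : 2 ≤ b) (hd1 : 1 ≤ d) (hd2 : d ≤ b - 1) :
    Real.logb b d ∈ Set.Ico (0:ℝ) 1 := by
  have hb1 : (1:ℝ) < b := by exact_mod_cast (by omega : 1 < b)
  have hdb : (d:ℝ) < b := by exact_mod_cast (by omega : d < b)
  refine ⟨Real.logb_nonneg hb1 (by exact_mod_cast hd1), ?_⟩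
  calc Real.logb b d < Real.logb b b :=
        Real.logb_lt_logb hb1 (by exact_mod_cast hd1) hdb
    _ = 1 := Real.logb_self_eq_one hb1

set_option maxHeartbeats 1000000 in
/-- For `b ≥ 5`, `a = r/s` with `r, s` coprime positive integers,
`1 < r/s < b` and `log_b a` irrational, the cardinality of `L ∩ (L - α)` in `ℝ/ℤ`
equals `⌊(b-1)/r⌋ + ⌊(gcd(b,r)-1)/s⌋`, where `L = {log_b 1, …, log_b (b-1)}` and
`α = log_b (r/s)`. -/
theorem ncard_L_inter_L_sub_alpha (b r s : ℕ) (hb : 5 ≤ b) (hr : 0 < r) (hs : 0 < s)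
    (hco : Nat.Coprime r s) (h1 : (s : ℝ) < r) (h2 : (r : ℝ) < (b : ℝ) * s)
    (hirr : Irrational (Real.logb b ((r : ℝ) / s))) :
    Set.ncard
      ({x : UnitAddCircle | ∃ d : ℕ, 1 ≤ d ∧ d ≤ b - 1 ∧
          x = ((Real.logb b d : ℝ) : UnitAddCircle)} ∩
       {x : UnitAddCircle | ∃ d : ℕ, 1 ≤ d ∧ d ≤ b - 1 ∧
          x = ((Real.logb b d - Real.logb b ((r : ℝ) / s) : ℝ) : UnitAddCircle)}) =
      (b - 1) / r + (Nat.gcd b r - 1) / s := by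
  have hb2 : 2 ≤ b := by omega
  have hb1 : (1:ℝ) < b := by exact_mod_cast (by omega : 1 < b)
  have hb0R : (0:ℝ) < b := by linarith
  have hsR : (0:ℝ) < s := by exact_mod_cast hs
  have hrR : (0:ℝ) < r := by exact_mod_cast hr
  have hsr : s < r := by exact_mod_cast h1
  have hrb : r < b * s := by exact_mod_cast h2
  set α := Real.logb b ((r:ℝ)/s) with hα
  set g := Nat.gcd b r with hgdef
  have hg0 : 0 < g := Nat.gcd_pos_of_pos_right _ hr
  set b' := b / g with hb'def
  set r' := r / g with hr'def
  have hgb : g * b' = b := Nat.mul_div_cancel' (Nat.gcd_dvd_left b r)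
  have hgr : g * r' = r := Nat.mul_div_cancel' (Nat.gcd_dvd_right b r)
  have hb'0 : 0 < b' := by by_contra h; push_neg at h; interval_cases b' <;> omega
  have hr'0 : 0 < r' := by by_contra h; push_neg at h; interval_cases r' <;> omega
  have hcob'r' : Nat.Coprime b' r' := Nat.coprime_div_gcd_div_gcd hg0
  have hcross : b' * r = r' * b := by rw [← hgb, ← hgr]; ring
  set A := (b-1)/r with hAdef
  set B := (g-1)/s with hBdef
  set f : ℕ → UnitAddCircle := fun n => ((Real.logb b n : ℝ) : UnitAddCircle) with hf
  set T : Finset ℕ :=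
    ((Finset.Icc 1 A).image fun m => s*m) ∪ ((Finset.Icc 1 B).image fun m => s*(b'*m))
    with hT
  -- bounds for elements of T
  have hboundA : ∀ m, 1 ≤ m → m ≤ A → 1 ≤ s*m ∧ s*m ≤ b-1 ∧ 1 ≤ r*m ∧ r*m ≤ b-1 := by
    intro m hm1 hm2
    have hmr : m * r ≤ b - 1 := (Nat.le_div_iff_mul_le hr).mp hm2
    have h1' : s*m ≤ r*m := Nat.mul_le_mul_right m (le_of_lt hsr)
    have h2' : r*m = m*r := Nat.mul_comm r m
    exact ⟨Nat.mul_pos hs hm1, by omega, Nat.mul_pos hr hm1, by omega⟩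
  have hboundB : ∀ m, 1 ≤ m → m ≤ B →
      1 ≤ s*(b'*m) ∧ s*(b'*m) ≤ b-1 ∧ 1 ≤ r'*m ∧ r'*m ≤ b-1 := by
    intro m hm1 hm2
    have hms : m * s ≤ g - 1 := (Nat.le_div_iff_mul_le hs).mp hm2
    have hmsg : m * s < g := by omega
    have hd : s*(b'*m) = (m*s)*b' := by ring
    have hdlt : (m*s)*b' < g*b' := (Nat.mul_lt_mul_right hb'0).mpr hmsg
    have he : (r'*m)*s = r'*(m*s) := by ring
    have helt : r'*(m*s) < r'*g := (Nat.mul_lt_mul_left hr'0).mpr hmsg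
    have hrg : r'*g = r := by rw [Nat.mul_comm]; exact hgr
    have he2 : (r'*m)*s < b*s := by omega
    have he3 : r'*m < b := Nat.lt_of_mul_lt_mul_right he2
    exact ⟨Nat.mul_pos hs (Nat.mul_pos hb'0 hm1), by omega,
      Nat.mul_pos hr'0 hm1, by omega⟩
  have hTball : ∀ n ∈ T, 1 ≤ n ∧ n ≤ b - 1 := by
    intro n hn
    rw [hT, Finset.mem_union] at hn
    rcases hn with hn | hn <;> rw [Finset.mem_image] at hn <;>
      obtain ⟨m, hm, rfl⟩ := hn <;> rw [Finset.mem_Icc] at hm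
    · exact ⟨(hboundA m hm.1 hm.2).1, (hboundA m hm.1 hm.2).2.1⟩
    · exact ⟨(hboundB m hm.1 hm.2).1, (hboundB m hm.1 hm.2).2.1⟩
  -- the set equality
  have hset : ({x : UnitAddCircle | ∃ d : ℕ, 1 ≤ d ∧ d ≤ b - 1 ∧
          x = ((Real.logb b d : ℝ) : UnitAddCircle)} ∩
       {x : UnitAddCircle | ∃ d : ℕ, 1 ≤ d ∧ d ≤ b - 1 ∧
          x = ((Real.logb b d - α : ℝ) : UnitAddCircle)}) = f '' ↑T := by
    ext x
    simp only [Set.mem_inter_iff, Set.mem_setOf_eq, Set.mem_image, Finset.mem_coe]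
    constructor
    · rintro ⟨⟨d, hd1, hd2, hxd⟩, ⟨e, he1, he2, hxe⟩⟩
      have hd0 : (0:ℝ) < d := by exact_mod_cast Nat.lt_of_lt_of_le Nat.zero_lt_one hd1
      have he0 : (0:ℝ) < e := by exact_mod_cast Nat.lt_of_lt_of_le Nat.zero_lt_one he1
      have hkey : ((Real.logb b d : ℝ) : UnitAddCircle) = ((Real.logb b e - α : ℝ)) := by
        rw [← hxd, hxe]
      obtain ⟨k, hk⟩ := (aux_AC_eq_iff _ _).mp hkey
      have hk' : Real.logb b ((d:ℝ) * ((r:ℝ)/s)) - Real.logb b e = k := by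
        rw [Real.logb_mul hd0.ne' (by positivity)]
        rw [← hα]; linarith
      have heq : (d:ℝ) * ((r:ℝ)/s) = (e:ℝ) * (b:ℝ)^k :=
        aux_eq_of_diff hb1 (by positivity) he0 k hk'
      have heq2 : (d:ℝ) * r = (e:ℝ) * s * (b:ℝ)^k := by
        field_simp at heq; linarith
      have hdR : (d:ℝ) ≤ (b:ℝ) - 1 := by
        have : (d:ℝ) + 1 ≤ b := by exact_mod_cast (by omega : d + 1 ≤ b)
        linarith
      have heR : (e:ℝ) ≤ (b:ℝ) - 1 := by
        have : (e:ℝ) + 1 ≤ b := by exact_mod_cast (by omega : e + 1 ≤ b)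
        linarith
      have hd1R : (1:ℝ) ≤ d := by exact_mod_cast hd1
      have he1R : (1:ℝ) ≤ e := by exact_mod_cast he1
      -- k is 0 or 1
      have hk0 : 0 ≤ k := by
        by_contra h; push_neg at h
        have hkle : k ≤ -1 := by omega
        have hle : (b:ℝ)^k ≤ (b:ℝ)^(-1:ℤ) := zpow_le_zpow_right₀ hb1.le hkle
        have hinv : (b:ℝ)^(-1:ℤ) = ((b:ℝ))⁻¹ := zpow_neg_one (b:ℝ)
        rw [hinv] at hle
        have h3 : (e:ℝ) * s * (b:ℝ)^k ≤ (e:ℝ) * s * ((b:ℝ))⁻¹ :=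
          mul_le_mul_of_nonneg_left hle (by positivity)
        have h4 : (d:ℝ) * r ≤ (e:ℝ) * s * ((b:ℝ))⁻¹ := by linarith
        have h5 : (d:ℝ) * r * b ≤ (e:ℝ) * s := by
          have hbne : (b:ℝ) ≠ 0 := by positivity
          calc (d:ℝ) * r * b ≤ ((e:ℝ) * s * ((b:ℝ))⁻¹) * b := by
                apply mul_le_mul_of_nonneg_right h4 (le_of_lt hb0R)
            _ = (e:ℝ) * s := by field_simp
        nlinarith [h5, mul_le_mul_of_nonneg_right heR hsR.le,
          mul_lt_mul_of_pos_right h1 hb0R,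
          mul_le_mul_of_nonneg_right (mul_le_mul_of_nonneg_right hd1R hrR.le) hb0R.le]
      have hk1 : k ≤ 1 := by
        by_contra h; push_neg at h
        have hkge : 2 ≤ k := by omega
        have h2k : (b:ℝ)^(2:ℤ) ≤ (b:ℝ)^k := zpow_le_zpow_right₀ hb1.le hkge
        have hb2R : (b:ℝ)^(2:ℤ) = b * b := by norm_num [zpow_two, pow_two]
        have h3 : (s:ℝ) * (b * b) ≤ (e:ℝ) * s * (b:ℝ)^k := by
          rw [← hb2R]
          calc (s:ℝ) * (b:ℝ)^(2:ℤ) ≤ (e:ℝ) * s * (b:ℝ)^(2:ℤ) := by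
                apply mul_le_mul_of_nonneg_right _ (by positivity)
                nlinarith
            _ ≤ (e:ℝ) * s * (b:ℝ)^k := by
                apply mul_le_mul_of_nonneg_left h2k (by positivity)
        have h4 : (d:ℝ) * r ≤ ((b:ℝ)-1) * r := mul_le_mul_of_nonneg_right hdR hrR.le
        nlinarith [h3, h4, heq2, mul_lt_mul_of_pos_left h2 hb0R]
      interval_cases k
      · -- k = 0
        simp only [zpow_zero, mul_one] at heq2
        have hde : d * r = e * s := by exact_mod_cast heq2
        have hre : r ∣ e := hco.dvd_of_dvd_mul_right ⟨d, by rw [← hde]; ring⟩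
        obtain ⟨m, rfl⟩ := hre
        have hd : d = s*m := by
          apply Nat.eq_of_mul_eq_mul_left hr
          calc r * d = d * r := by ring
            _ = r * m * s := hde
            _ = r * (s*m) := by ring
        have hm1 : 1 ≤ m := Nat.pos_of_ne_zero (by rintro rfl; simp at he1)
        have hmA : m ≤ A := (Nat.le_div_iff_mul_le hr).mpr (by rwa [Nat.mul_comm])
        refine ⟨s*m, ?_, ?_⟩
        · rw [hT, Finset.mem_union]; left
          rw [Finset.mem_image]; exact ⟨m, Finset.mem_Icc.mpr ⟨hm1, hmA⟩, rfl⟩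
        · rw [hxd, hd]
      · -- k = 1
        simp only [zpow_one] at heq2
        have hde : d * r = e * s * b := by exact_mod_cast heq2
        have hsd : s ∣ d := hco.symm.dvd_of_dvd_mul_right ⟨e*b, by rw [hde]; ring⟩
        obtain ⟨d₁, rfl⟩ := hsd
        have hde2 : d₁ * r = e * b := by
          apply Nat.eq_of_mul_eq_mul_left hs
          calc s * (d₁ * r) = s * d₁ * r := by ring
            _ = e * s * b := hde
            _ = s * (e * b) := by ring
        have hde3 : d₁ * r' = e * b' := by
          apply Nat.eq_of_mul_eq_mul_left hg0
          calc g * (d₁ * r') = d₁ * (g * r') := by ring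
            _ = d₁ * r := by rw [hgr]
            _ = e * b := hde2
            _ = e * (g * b') := by rw [hgb]
            _ = g * (e * b') := by ring
        have hb'd : b' ∣ d₁ := hcob'r'.dvd_of_dvd_mul_right ⟨e, by rw [hde3]; ring⟩
        obtain ⟨m, rfl⟩ := hb'd
        have hem : e = r' * m := by
          apply Nat.eq_of_mul_eq_mul_left hb'0
          calc b' * e = e * b' := by ring
            _ = b' * m * r' := hde3.symm
            _ = b' * (r' * m) := by ring
        have hm1 : 1 ≤ m := Nat.pos_of_ne_zero (by rintro rfl; simp at hd1)
        have hmB : m ≤ B := by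
          apply (Nat.le_div_iff_mul_le hs).mpr
          have h5 : (m*s)*b' = s*(b'*m) := by ring
          have h6 : (m*s)*b' < g*b' := by rw [h5, hgb]; omega
          have := Nat.lt_of_mul_lt_mul_right h6
          omega
        refine ⟨s*(b'*m), ?_, ?_⟩
        · rw [hT, Finset.mem_union]; right
          rw [Finset.mem_image]; exact ⟨m, Finset.mem_Icc.mpr ⟨hm1, hmB⟩, rfl⟩
        · rw [hxd]
    · rintro ⟨n, hn, rfl⟩
      rw [hT, Finset.mem_union] at hn
      have hfirst : ∀ q : ℕ, 1 ≤ q → q ≤ b - 1 →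
          ∃ d : ℕ, 1 ≤ d ∧ d ≤ b - 1 ∧ f q = ((Real.logb b d : ℝ) : UnitAddCircle) :=
        fun q hq1 hq2 => ⟨q, hq1, hq2, rfl⟩
      rcases hn with hn | hn <;> rw [Finset.mem_image] at hn <;>
        obtain ⟨m, hm, rfl⟩ := hn <;> rw [Finset.mem_Icc] at hm
      · obtain ⟨hn1, hn2, he1, he2⟩ := hboundA m hm.1 hm.2
        refine ⟨hfirst _ hn1 hn2, r*m, he1, he2, ?_⟩
        have hm0 : (0:ℝ) < m := by exact_mod_cast hm.1
        show f (s*m) = _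
        simp only [hf]
        apply ((aux_AC_eq_iff _ _).mpr ⟨0, ?_⟩)
        have hid : ((s*m:ℕ):ℝ) * ((r:ℝ)/s) = ((r*m:ℕ):ℝ) * (b:ℝ)^(0:ℤ) := by
          push_cast; field_simp
        have hdiff := aux_diff_of_eq hb1 (y := ((r*m:ℕ):ℝ)) (by positivity) 0 hid
        rw [Real.logb_mul (by positivity) (by positivity)] at hdiff
        rw [← hα] at hdiff
        push_cast at hdiff ⊢
        linarith
      · obtain ⟨hn1, hn2, he1, he2⟩ := hboundB m hm.1 hm.2
        refine ⟨hfirst _ hn1 hn2, r'*m, he1, he2, ?_⟩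
        have hm0 : (0:ℝ) < m := by exact_mod_cast hm.1
        have hb'R : (0:ℝ) < b' := by exact_mod_cast hb'0
        have hr'R : (0:ℝ) < r' := by exact_mod_cast hr'0
        show f (s*(b'*m)) = _
        simp only [hf]
        apply ((aux_AC_eq_iff _ _).mpr ⟨1, ?_⟩)
        have hcrossR : (b':ℝ) * r = (r':ℝ) * b := by exact_mod_cast hcross
        have hid : ((s*(b'*m):ℕ):ℝ) * ((r:ℝ)/s) = ((r'*m:ℕ):ℝ) * (b:ℝ)^(1:ℤ) := by
          push_cast; field_simp; linear_combination hcrossR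
        have hdiff := aux_diff_of_eq hb1 (y := ((r'*m:ℕ):ℝ)) (by positivity) 1 hid
        rw [Real.logb_mul (by positivity) (by positivity)] at hdiff
        rw [← hα] at hdiff
        push_cast at hdiff ⊢
        linarith
  rw [hset]
  -- injectivity
  have hinj : Set.InjOn f ↑T := by
    intro n₁ h₁ n₂ h₂ hfe
    obtain ⟨ha1, ha2⟩ := hTball n₁ (by exact_mod_cast h₁)
    obtain ⟨hc1, hc2⟩ := hTball n₂ (by exact_mod_cast h₂)
    have := aux_AC_inj (aux_logb_mem hb2 ha1 ha2) (aux_logb_mem hb2 hc1 hc2) hfe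
    have hn12 : (n₁:ℝ) = n₂ :=
      Real.logb_injOn_pos hb1 (Set.mem_Ioi.mpr (by exact_mod_cast ha1))
        (Set.mem_Ioi.mpr (by exact_mod_cast hc1)) this
    exact_mod_cast hn12
  rw [Set.ncard_image_of_injOn hinj, Set.ncard_coe_finset]
  -- counting
  have hdisj : Disjoint ((Finset.Icc 1 A).image fun m => s*m)
      ((Finset.Icc 1 B).image fun m => s*(b'*m)) := by
    rw [Finset.disjoint_left]
    rintro n hn1 hn2
    rw [Finset.mem_image] at hn1 hn2
    obtain ⟨m₁, hm₁, h₁⟩ := hn1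
    obtain ⟨m₂, hm₂, h₂⟩ := hn2
    rw [Finset.mem_Icc] at hm₁ hm₂
    have hmm : m₁ = b' * m₂ := by
      apply Nat.eq_of_mul_eq_mul_left hs
      rw [h₁, h₂]
    have hle : m₁ * r ≤ b - 1 := (Nat.le_div_iff_mul_le hr).mp hm₁.2
    have hkey : m₁ * r = m₂ * r' * b := by rw [hmm]; calc b'*m₂*r = m₂*(b'*r) := by ring
      _ = m₂*(r'*b) := by rw [hcross]
      _ = m₂*r'*b := by ring
    have hge : b ≤ m₂ * r' * b := Nat.le_mul_of_pos_left b (Nat.mul_pos hm₂.1 hr'0)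
    omega
  rw [hT, Finset.card_union_of_disjoint hdisj]
  have hinj1 : Function.Injective (fun m => s*m) := fun a b h =>
    Nat.eq_of_mul_eq_mul_left hs h
  have hinj2 : Function.Injective (fun m => s*(b'*m)) := by
    intro a b h
    simp only at h
    have := Nat.eq_of_mul_eq_mul_left hs h
    exact Nat.eq_of_mul_eq_mul_left hb'0 this
  rw [Finset.card_image_of_injective _ hinj1, Finset.card_image_of_injective _ hinj2]
  simp [Nat.card_Icc]
end

section
/- Let b ≥ 5 be a squarefree integer and a = r/s with r, s coprime positive integers, 1 < r/s < b, and log_b a irrational. Let α = log_b a and L = {log_b d : d = 1,...,b−1} ⊂ R/Z. Then for every integer i ≥ 2, L ∩ (L − iα) ⊆ L ∩ (L − α), where all sets are taken modulo 1. -/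
open Real

lemma coe_eq_of_sub_int {a c : ℝ} (z : ℤ) (h : a - c = z) : (a : UnitAddCircle) = c := by
  rw [QuotientAddGroup.eq]
  refine AddSubgroup.mem_zmultiples_iff.mpr ⟨-z, ?_⟩
  simp [zsmul_eq_mul]; linarith

lemma sub_int_of_coe_eq {a c : ℝ} (h : (a:UnitAddCircle) = c) : ∃ z : ℤ, a - c = z := by
  rw [QuotientAddGroup.eq] at h
  obtain ⟨z, hz⟩ := AddSubgroup.mem_zmultiples_iff.mp h
  exact ⟨-z, by simp [zsmul_eq_mul] at hz; push_cast; linarith⟩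


/-- For squarefree `b ≥ 5`, `a = r/s` with `r, s` coprime positive
integers, `1 < r/s < b` and `α = log_b a` irrational, for every `i ≥ 2` we have
`L ∩ (L - iα) ⊆ L ∩ (L - α)` in `ℝ/ℤ`, where `L = {log_b d : 1 ≤ d ≤ b-1}`. -/
theorem L_inter_sub_subset (b r s : ℕ) (hb : 5 ≤ b) (hsf : Squarefree b)
    (hr : 0 < r) (hs : 0 < s) (hco : Nat.Coprime r s)
    (h1 : (s : ℝ) < r) (h2 : (r : ℝ) < (b : ℝ) * s)
    (hirr : Irrational (Real.logb b ((r : ℝ) / s))) (i : ℕ) (hi : 2 ≤ i) :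
    ({x : UnitAddCircle | ∃ d : ℕ, 1 ≤ d ∧ d ≤ b - 1 ∧
        x = ((Real.logb b d : ℝ) : UnitAddCircle)} ∩
     {x : UnitAddCircle | ∃ d : ℕ, 1 ≤ d ∧ d ≤ b - 1 ∧
        x = ((Real.logb b d - (i : ℝ) * Real.logb b ((r : ℝ) / s) : ℝ) : UnitAddCircle)})
    ⊆
    ({x : UnitAddCircle | ∃ d : ℕ, 1 ≤ d ∧ d ≤ b - 1 ∧
        x = ((Real.logb b d : ℝ) : UnitAddCircle)} ∩
     {x : UnitAddCircle | ∃ d : ℕ, 1 ≤ d ∧ d ≤ b - 1 ∧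
        x = ((Real.logb b d - Real.logb b ((r : ℝ) / s) : ℝ) : UnitAddCircle)}) := by
  rintro x ⟨⟨d1, hd11, hd1b, hx1⟩, ⟨d2, hd21, hd2b, hx2⟩⟩
  refine ⟨⟨d1, hd11, hd1b, hx1⟩, ?_⟩
  obtain ⟨j, rfl⟩ : ∃ j, i = j + 1 := ⟨i - 1, by omega⟩
  have hj : 1 ≤ j := by omega
  have h0b : (0:ℝ) < b := by positivity
  have hb1 : (b:ℝ) ≠ 1 := by
    have : (5:ℝ) ≤ b := by exact_mod_cast hb
    linarith
  have hd1pos : (0:ℝ) < d1 := by exact_mod_cast hd11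
  have hd2pos : (0:ℝ) < d2 := by exact_mod_cast hd21
  have hrpos : (0:ℝ) < r := by exact_mod_cast hr
  have hspos : (0:ℝ) < s := by exact_mod_cast hs
  have hrs : (0:ℝ) < (r:ℝ)/s := by positivity
  obtain ⟨z, hz⟩ := sub_int_of_coe_eq (hx1.symm.trans hx2)
  have expeq : (d1:ℝ) * ((r:ℝ)/s)^(j+1) = d2 * (b:ℝ)^z := by
    have hexp : Real.logb b d1 + ((j+1:ℕ):ℝ) * Real.logb b ((r:ℝ)/s) = Real.logb b d2 + z := by
      push_cast at hz ⊢; linarith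
    have h1' : (b:ℝ) ^ (Real.logb b d1 + ((j+1:ℕ):ℝ) * Real.logb b ((r:ℝ)/s))
        = (b:ℝ) ^ (Real.logb b (d2:ℝ) + (z:ℝ)) := by rw [hexp]
    rw [rpow_add h0b, rpow_add h0b, rpow_logb h0b hb1 hd1pos, rpow_logb h0b hb1 hd2pos] at h1'
    have h2' : (b:ℝ) ^ (((j+1:ℕ):ℝ) * Real.logb b ((r:ℝ)/s)) = ((r:ℝ)/s)^(j+1:ℕ) := by
      rw [mul_comm, rpow_mul h0b.le, rpow_logb h0b hb1 hrs, rpow_natCast]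
    rw [h2'] at h1'
    rw [h1', rpow_intCast]
  have G : ∃ n : ℕ, d1 * r ^ (j+1) = d2 * (s ^ (j+1) * b ^ n) := by
    obtain ⟨n, rfl | rfl⟩ := z.eq_nat_or_neg
    · refine ⟨n, ?_⟩
      have : ((d1 * r ^ (j+1) : ℕ) : ℝ) = ((d2 * (s ^ (j+1) * b ^ n) : ℕ) : ℝ) := by
        push_cast
        rw [zpow_natCast] at expeq
        field_simp at expeq
        have key : (s:ℝ)^(j+1) * ((r:ℝ)/s)^(j+1) = (r:ℝ)^(j+1) := by rw [div_pow]; field_simp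
        linear_combination (s:ℝ)^(j+1) * expeq - (d1:ℝ) * key
      exact_mod_cast this
    · have F : (d1 * r ^ (j+1) * b ^ n : ℕ) = (d2 * s ^ (j+1) : ℕ) := by
        have : ((d1 * r ^ (j+1) * b ^ n : ℕ) : ℝ) = ((d2 * s ^ (j+1) : ℕ) : ℝ) := by
          push_cast
          rw [zpow_neg, zpow_natCast] at expeq
          have hbn : ((b:ℝ))^n ≠ 0 := by positivity
          field_simp at expeq
          have key : (s:ℝ)^(j+1) * ((r:ℝ)/s)^(j+1) = (r:ℝ)^(j+1) := by rw [div_pow]; field_simp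
          linear_combination (s:ℝ)^(j+1) * expeq - (d1:ℝ) * (b:ℝ)^n * key
        exact_mod_cast this
      rcases Nat.eq_zero_or_pos n with rfl | hn
      · refine ⟨0, ?_⟩
        rw [pow_zero, mul_one] at F ⊢
        exact F
      · exfalso
        have hsr : s < r := by exact_mod_cast h1
        have hsi : s ^ (j+1) ≤ r ^ (j+1) := Nat.pow_le_pow_left hsr.le (j+1)
        have hbn : b ≤ b ^ n := Nat.le_self_pow (by omega) b
        have hle : b * r ^ (j+1) ≤ d2 * s ^ (j+1) := by
          calc b * r ^ (j+1) ≤ b ^ n * r ^ (j+1) := Nat.mul_le_mul_right _ hbn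
            _ = 1 * (r ^ (j+1) * b ^ n) := by ring
            _ ≤ d1 * (r ^ (j+1) * b ^ n) := Nat.mul_le_mul_right _ hd11
            _ = d1 * r ^ (j+1) * b ^ n := by ring
            _ = d2 * s ^ (j+1) := F
        have hle2 : d2 * s ^ (j+1) ≤ (b - 1) * r ^ (j+1) := by
          calc d2 * s ^ (j+1) ≤ (b-1) * s ^ (j+1) := Nat.mul_le_mul_right _ hd2b
            _ ≤ (b-1) * r ^ (j+1) := Nat.mul_le_mul_left _ hsi
        have hri : 0 < r ^ (j+1) := Nat.pow_pos hr
        have : b * r ^ (j+1) ≤ (b-1) * r ^ (j+1) := le_trans hle hle2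
        have : b ≤ b - 1 := Nat.le_of_mul_le_mul_right this hri
        omega
  obtain ⟨n, E⟩ := G
  have hcop : (s^(j+1)).Coprime (r^(j+1)) := Nat.Coprime.pow (j+1) (j+1) hco.symm
  have hdvd : s^(j+1) ∣ d1 * r^(j+1) := E ▸ ⟨d2 * b^n, by ring⟩
  obtain ⟨t, ht⟩ := hcop.dvd_of_dvd_mul_right hdvd
  have ht1 : 0 < t := Nat.pos_of_ne_zero fun h => by
    rw [h, mul_zero] at ht; omega
  have hsipos : 0 < s ^ (j+1) := Nat.pow_pos hs
  have E2 : t * r^(j+1) = d2 * b^n := by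
    have h' : s^(j+1) * (t * r^(j+1)) = s^(j+1) * (d2 * b^n) := by
      calc s^(j+1) * (t * r^(j+1)) = (s^(j+1) * t) * r^(j+1) := by ring
        _ = d1 * r^(j+1) := by rw [← ht]
        _ = d2 * (s^(j+1) * b^n) := E
        _ = s^(j+1) * (d2 * b^n) := by ring
    exact Nat.eq_of_mul_eq_mul_left hsipos h'
  have key : ∃ d3 m : ℕ, 1 ≤ d3 ∧ d3 ≤ b - 1 ∧ d1 * r = d3 * s * b ^ m := by
    have hNd1 : d1 * r = (t * s ^ j * r) * s := by rw [ht]; ring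
    have hNpos : 0 < t * s ^ j * r := by positivity
    by_cases hN : t * s ^ j * r ≤ b - 1
    · exact ⟨t * s ^ j * r, 0, hNpos, hN, by simpa using hNd1⟩
    · have hNb : b ≤ t * s ^ j * r := by omega
      have hn1 : 1 ≤ n := by
        by_contra hn0
        have hn0' : n = 0 := by omega
        subst hn0'
        rw [pow_zero, mul_one] at E2
        have hsr : s < r := by exact_mod_cast h1
        have hle : t * s ^ j * r ≤ t * r ^ j * r := by
          have h3 : s ^ j ≤ r ^ j := Nat.pow_le_pow_left hsr.le j
          exact Nat.mul_le_mul_right _ (Nat.mul_le_mul_left _ h3)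
        have : t * s ^ j * r ≤ d2 := by
          calc t * s ^ j * r ≤ t * r ^ j * r := hle
            _ = t * r ^ (j+1) := by ring
            _ = d2 := E2
        omega
      have hbtr : b ∣ t * r := by
        have hb1' : b ∣ t * r ^ (j+1) := by
          rw [E2]
          obtain ⟨n', hn'⟩ : ∃ n', n = n' + 1 := ⟨n - 1, by omega⟩
          refine ⟨d2 * b ^ n', ?_⟩
          rw [hn', pow_succ]; ring
        have hb2' : t * r ^ (j+1) ∣ (t * r) ^ (j+1) := ⟨t ^ j, by ring⟩
        exact (hsf.dvd_pow_iff_dvd (n := j+1) (by omega)).mp (hb1'.trans hb2')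
      have hbN : b ∣ t * s ^ j * r := by
        have h4 := hbtr.mul_right (s ^ j)
        rwa [show t * r * s ^ j = t * s ^ j * r from by ring] at h4
      obtain ⟨d3, hd3⟩ := hbN
      refine ⟨d3, 1, ?_, ?_, ?_⟩
      · refine Nat.pos_of_ne_zero fun h => ?_
        rw [h, mul_zero] at hd3
        rw [hd3] at hNb
        omega
      · have hrb : r < b * s := by exact_mod_cast h2
        have hNlt : (t * s ^ j * r) * s < ((b-1) * b) * s := by
          rw [← hNd1]
          calc d1 * r ≤ (b-1) * r := Nat.mul_le_mul_right _ hd1b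
            _ < (b-1) * (b * s) := mul_lt_mul_of_pos_left hrb (by omega)
            _ = ((b-1) * b) * s := by ring
        have hNlt2 : t * s ^ j * r < (b-1) * b :=
          lt_of_mul_lt_mul_right hNlt (Nat.zero_le s)
        rw [hd3] at hNlt2
        have hlt : d3 < b - 1 := by
          have h5 : d3 * b < (b-1) * b := by rw [mul_comm b d3] at hNlt2; exact hNlt2
          exact lt_of_mul_lt_mul_right h5 (Nat.zero_le b)
        omega
      · rw [hNd1, hd3, pow_one]; ring
  obtain ⟨d3, m, hd31, hd3b, EQ⟩ := key
  refine ⟨d3, hd31, hd3b, ?_⟩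
  rw [hx1]
  have hd3pos : (0:ℝ) < d3 := by exact_mod_cast hd31
  have EQR : (d1:ℝ) * r = d3 * s * (b:ℝ)^m := by exact_mod_cast congrArg (Nat.cast (R := ℝ)) EQ
  have hlog : Real.logb b d1 + Real.logb b r = Real.logb b d3 + Real.logb b s + m := by
    have h1' : Real.logb b ((d1:ℝ) * r) = Real.logb b ((d3:ℝ) * s * (b:ℝ)^m) := by rw [EQR]
    rw [logb_mul (ne_of_gt hd1pos) (ne_of_gt hrpos),
        logb_mul (by positivity) (by positivity),
        logb_mul (ne_of_gt hd3pos) (ne_of_gt hspos),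
        logb_pow, logb_self_eq_one (by exact_mod_cast by omega : (1:ℝ) < b)] at h1'
    linarith
  have hdiv : Real.logb b ((r:ℝ)/s) = Real.logb b r - Real.logb b s :=
    logb_div (ne_of_gt hrpos) (ne_of_gt hspos)
  apply coe_eq_of_sub_int (m : ℤ)
  rw [hdiv]
  push_cast
  linarith
end

section
/- Let b ≥ 5 be squarefree and a an integer with a > b and gcd(a,b) = 1. Then p_{a,b}(n) = (b−1)·n for all n ≥ 1. -/
/-- The leading digit of `x` in base `b`: the unique `d ∈ {1,…,b-1}` with
`d · b^k ≤ x < (d+1) · b^k` for some integer `k` (here `k = ⌊log_b x⌋`). -/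
noncomputable def leadingDigit (b : ℕ) (x : ℝ) : ℕ :=
  (⌊x / (b : ℝ) ^ (⌊Real.logb b x⌋ : ℤ)⌋).toNat

/-- The block complexity of the leading digit sequence of `a^n` in base `b`:
the number of distinct blocks of length `n`. -/
noncomputable def blockComplexity (a : ℝ) (b : ℕ) (n : ℕ) : ℕ :=
  Set.ncard {w : Fin n → ℕ |
    ∃ m : ℕ, 1 ≤ m ∧ ∀ i : Fin n, w i = leadingDigit b (a ^ (m + (i : ℕ)))}

open Real

lemma keyNatAux (b a d d' : ℕ) (ha : b < a) (hco : Nat.gcd a b = 1)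
    (hd : 1 ≤ d) (hd2 : d < b) (hd' : 1 ≤ d') (hd2' : d' < b) (K j : ℤ) (hK : 0 ≤ K)
    (h : (d : ℝ) = (d' : ℝ) * (a : ℝ) ^ K * (b : ℝ) ^ j) : d = d' ∧ K = 0 := by
  have hb2 : 2 ≤ b := by omega
  have hbR : (0:ℝ) < b := by positivity
  have haR : (0:ℝ) < a := by exact_mod_cast (by omega : 0 < a)
  lift K to ℕ using hK with K'
  rcases le_or_gt 0 j with hj | hj
  · lift j to ℕ using hj with j'
    have h' : (d : ℝ) = ((d' * a ^ K' * b ^ j' : ℕ) : ℝ) := by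
      push_cast [zpow_natCast] at h ⊢; linarith [h]
    have hnat : d = d' * a ^ K' * b ^ j' := Nat.cast_injective h'
    have hK0 : K' = 0 := by
      by_contra hK0
      have h1 : a ≤ a ^ K' := Nat.le_self_pow hK0 a
      have h2 : 1 ≤ b ^ j' := Nat.one_le_iff_ne_zero.mpr (by positivity)
      have h3 : 1 * a * 1 ≤ d' * a ^ K' * b ^ j' :=
        Nat.mul_le_mul (Nat.mul_le_mul hd' h1) h2
      omega
    subst hK0
    simp only [pow_zero, mul_one] at hnat
    have hj0 : j' = 0 := by
      by_contra hj0
      have h1 : b ≤ b ^ j' := Nat.le_self_pow hj0 b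
      have h3 : 1 * b ≤ d' * b ^ j' := Nat.mul_le_mul hd' h1
      omega
    subst hj0; simp at hnat; omega
  · set j' := (-j).toNat with hj'
    have hjj : (j' : ℤ) = -j := Int.toNat_of_nonneg (by omega)
    have hj1 : 1 ≤ j' := by omega
    have h' : ((d * b ^ j' : ℕ) : ℝ) = ((d' * a ^ K' : ℕ) : ℝ) := by
      have hbj : (b:ℝ) ^ j = ((b:ℝ) ^ j')⁻¹ := by
        rw [← zpow_natCast (b:ℝ) j', ← zpow_neg]
        congr 1; omega
      push_cast [zpow_natCast] at h ⊢
      rw [hbj] at h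
      field_simp at h
      linarith [h]
    have hnat : d * b ^ j' = d' * a ^ K' := Nat.cast_injective h'
    exfalso
    have hK0 : K' ≠ 0 := by
      rintro rfl
      simp only [pow_zero, mul_one] at hnat
      have h1 : b ≤ b ^ j' := Nat.le_self_pow (by omega) b
      have h3 : 1 * b ≤ d * b ^ j' := Nat.mul_le_mul hd h1
      omega
    have hdvd : a ^ K' ∣ d * b ^ j' := ⟨d', by rw [hnat]; ring⟩
    have hcop : Nat.Coprime (a ^ K') (b ^ j') :=
      Nat.Coprime.pow K' j' hco
    have hdvd2 : a ^ K' ∣ d := (Nat.Coprime.dvd_of_dvd_mul_right hcop) hdvd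
    have h3 : a ^ K' ≤ d := Nat.le_of_dvd (by omega) hdvd2
    have h4 : a ≤ a ^ K' := Nat.le_self_pow hK0 a
    omega

section
variable (b a : ℕ)

lemma keyNat (ha : b < a) (hco : Nat.gcd a b = 1) {d d' : ℕ}
    (hd : 1 ≤ d) (hd2 : d < b) (hd' : 1 ≤ d') (hd2' : d' < b) (K j : ℤ)
    (h : (d : ℝ) = (d' : ℝ) * (a : ℝ) ^ K * (b : ℝ) ^ j) : d = d' ∧ K = 0 := by
  have hbR : (0:ℝ) < b := by exact_mod_cast (show (0:ℕ) < b by omega)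
  have haR : (0:ℝ) < a := by exact_mod_cast (show (0:ℕ) < a by omega)
  rcases le_or_gt 0 K with hK | hK
  · exact keyNatAux b a d d' ha hco hd hd2 hd' hd2' K j hK h
  · have h' : (d' : ℝ) = (d : ℝ) * (a : ℝ) ^ (-K) * (b : ℝ) ^ (-j) := by
      rw [zpow_neg, zpow_neg, h]
      field_simp
    obtain ⟨h1, h2⟩ := keyNatAux b a d' d ha hco hd' hd2' hd hd2 (-K) (-j) (by omega) h'
    omega

lemma keyLogb (hb : 5 ≤ b) (ha : b < a) (hco : Nat.gcd a b = 1) {d d' : ℕ}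
    (hd : 1 ≤ d) (hd2 : d < b) (hd' : 1 ≤ d') (hd2' : d' < b) (K j : ℤ)
    (h : Real.logb b d = Real.logb b d' + K * Real.logb b a + j) : d = d' ∧ K = 0 := by
  have hb1 : (1:ℝ) < b := by exact_mod_cast (show (1:ℕ) < b by omega)
  have hbR : (0:ℝ) < b := by linarith
  have hbne : (b:ℝ) ≠ 1 := by linarith
  have haR : (0:ℝ) < a := by exact_mod_cast (show (0:ℕ) < a by omega)
  have hdR : (0:ℝ) < d := by exact_mod_cast (show (0:ℕ) < d from hd)
  have hdR' : (0:ℝ) < d' := by exact_mod_cast (show (0:ℕ) < d' from hd')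
  apply keyNat b a ha hco hd hd2 hd' hd2' K j
  have e1 : (d:ℝ) = (b:ℝ) ^ Real.logb b (d:ℝ) := (Real.rpow_logb hbR hbne hdR).symm
  rw [e1, h]
  rw [Real.rpow_add hbR, Real.rpow_add hbR, Real.rpow_logb hbR hbne hdR']
  congr 1
  · congr 1
    rw [mul_comm (K:ℝ), Real.rpow_mul (le_of_lt hbR), Real.rpow_logb hbR hbne haR,
      Real.rpow_intCast]
  · rw [Real.rpow_intCast]

lemma keyMulInt (hb : 5 ≤ b) (ha : b < a) (hco : Nat.gcd a b = 1) (K : ℤ) (k : ℤ)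
    (h : (K : ℝ) * Real.logb b a = k) : K = 0 := by
  have := keyLogb b a hb ha hco (d := 1) (d' := 1) le_rfl (by omega) le_rfl (by omega) K (-k)
    (by push_cast; rw [h]; ring)
  exact this.2

lemma irrational_alpha (hb : 5 ≤ b) (ha : b < a) (hco : Nat.gcd a b = 1) :
    Irrational (Real.logb b a) := by
  have hb1 : (1:ℝ) < b := by exact_mod_cast (show (1:ℕ) < b by omega)
  have ha1 : (1:ℝ) < a := by exact_mod_cast (show (1:ℕ) < a by omega)
  rw [irrational_iff_ne_rational]
  intro p q _ h
  by_cases hq : q = 0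
  · subst hq
    rw [Int.cast_zero, div_zero] at h
    exact absurd h (ne_of_gt (Real.logb_pos hb1 ha1))
  · have hqR : (q:ℝ) ≠ 0 := Int.cast_ne_zero.mpr hq
    exact hq (keyMulInt b a hb ha hco q p (by rw [h]; field_simp))

end

lemma fract_step (i : ℕ) (x y : ℝ) (j : ℤ) (h : x = y + j) : Int.fract x = Int.fract y := by
  rw [h, Int.fract_add_intCast]

lemma dense_orbit (α : ℝ) (hirr : Irrational α) (p q : ℝ) (hp : 0 ≤ p) (hpq : p < q)
    (hq : q ≤ 1) : ∃ m : ℕ, 1 ≤ m ∧ p < Int.fract (m * α) ∧ Int.fract (m * α) < q := by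
  classical
  set G : AddSubgroup ℝ := AddSubgroup.zmultiples 1 ⊔ AddSubgroup.zmultiples α with hG
  have hdense : Dense (G : Set ℝ) := by
    rcases AddSubgroup.dense_or_cyclic G with h | ⟨g, hg⟩
    · exact h
    · exfalso
      have h1 : (1:ℝ) ∈ G := le_sup_left (α := AddSubgroup ℝ)
        (AddSubgroup.mem_zmultiples 1)
      have h2 : α ∈ G := le_sup_right (α := AddSubgroup ℝ)
        (AddSubgroup.mem_zmultiples α)
      rw [hg] at h1 h2
      obtain ⟨m, hm⟩ := AddSubgroup.mem_closure_singleton.mp h1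
      obtain ⟨k, hk⟩ := AddSubgroup.mem_closure_singleton.mp h2
      rw [zsmul_eq_mul] at hm hk
      have hm0 : m ≠ 0 := by rintro rfl; simp at hm
      rw [irrational_iff_ne_rational] at hirr
      apply hirr k m hm0
      have hmR : (m:ℝ) ≠ 0 := Int.cast_ne_zero.mpr hm0
      have hgval : g = 1 / m := by
        rw [eq_div_iff hmR, mul_comm]; exact hm
      rw [← hk, hgval]; ring
  obtain ⟨g0, hg0G, hg0a, hg0b⟩ := hdense.exists_between (show (0:ℝ) < q - p by linarith)
  obtain ⟨y, hy, z, hz, hyz⟩ := AddSubgroup.mem_sup.mp hg0G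
  obtain ⟨j, hj⟩ := AddSubgroup.mem_zmultiples_iff.mp hy
  obtain ⟨k, hk⟩ := AddSubgroup.mem_zmultiples_iff.mp hz
  rw [zsmul_eq_mul, mul_one] at hj
  rw [zsmul_eq_mul] at hk
  have hgeq : g0 = j + k * α := by rw [← hyz, ← hj, ← hk]
  have hg0pos : 0 < g0 := hg0a
  have hk0 : k ≠ 0 := by
    rintro rfl
    rw [Int.cast_zero, zero_mul, add_zero] at hgeq
    have h01 : (0:ℝ) < j := by rw [← hgeq]; exact hg0a
    have h02 : (j:ℝ) < 1 := by rw [hgeq] at hg0b; linarith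
    have hj1 : 0 < j := by exact_mod_cast h01
    have hj2 : j < 1 := by exact_mod_cast h02
    omega
  rcases lt_or_gt_of_ne hk0 with hkneg | hkpos
  · -- k < 0 : use m = i * (-k), fract (m α) = 1 - i g0 ∈ (p,q)
    set i : ℕ := ⌊(1 - q) / g0⌋₊ + 1 with hi
    have hi1 : (1:ℕ) ≤ i := by omega
    have hig1 : 1 - q < i * g0 := by
      have h2 : (1 - q) / g0 < (i:ℝ) := by
        have := Nat.lt_floor_add_one ((1 - q) / g0)
        rw [hi]; push_cast; linarith
      calc 1 - q = ((1-q)/g0) * g0 := by field_simp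
        _ < i * g0 := by apply mul_lt_mul_of_pos_right h2 hg0pos
    have hig2 : (i:ℝ) * g0 < 1 - p := by
      have h1 : (0:ℝ) ≤ (1 - q) / g0 := div_nonneg (by linarith) hg0pos.le
      have h2 : (⌊(1 - q) / g0⌋₊ : ℝ) ≤ (1 - q) / g0 := Nat.floor_le h1
      have h3 : (i:ℝ) ≤ (1-q)/g0 + 1 := by rw [hi]; push_cast; linarith
      have h4 : (i:ℝ) * g0 ≤ ((1-q)/g0 + 1) * g0 := mul_le_mul_of_nonneg_right h3 hg0pos.le
      have h5 : ((1-q)/g0 + 1) * g0 = (1-q) + g0 := by field_simp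
      linarith
    have higpos : 0 < (i:ℝ) * g0 := by
      apply mul_pos _ hg0pos
      exact_mod_cast hi1
    have higlt1 : (i:ℝ) * g0 < 1 := by linarith
    set K' : ℕ := (-k).toNat with hK'
    have hkt : (K' : ℤ) = -k := Int.toNat_of_nonneg (by omega)
    have hkR : (K' : ℝ) = -(k:ℝ) := by exact_mod_cast hkt
    have hK1 : 1 ≤ K' := by omega
    refine ⟨i * K', Nat.one_le_iff_ne_zero.mpr (by positivity), ?_, ?_⟩
    all_goals {
      have hma : Int.fract (((i * K' : ℕ):ℝ) * α) = 1 - i * g0 := by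
        have hstep : ((i * K' : ℕ):ℝ) * α = -((i:ℝ) * g0) + (((i:ℤ) * j : ℤ) : ℝ) := by
          have h1 : ((i * K' : ℕ):ℝ) = (i:ℝ) * (K':ℝ) := Nat.cast_mul i K'
          have h2 : (((i:ℤ) * j : ℤ):ℝ) = (i:ℝ) * (j:ℝ) := by
            rw [Int.cast_mul, Int.cast_natCast]
          have hka : (K':ℝ) * α = j - g0 := by rw [hkR, hgeq]; ring
          rw [h1, h2, mul_assoc, hka]; ring
        rw [hstep, Int.fract_add_intCast, Int.fract_neg, Int.fract_eq_self.mpr ⟨higpos.le, higlt1⟩]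
        rw [Int.fract_eq_self.mpr ⟨higpos.le, higlt1⟩]
        exact ne_of_gt higpos
      rw [hma]
      linarith }
  · -- k > 0 : use m = i * k, fract (m α) = i g0 ∈ (p,q)
    set i : ℕ := ⌊p / g0⌋₊ + 1 with hi
    have hi1 : (1:ℕ) ≤ i := by omega
    have hig1 : p < i * g0 := by
      have h2 : p / g0 < (i:ℝ) := by
        have := Nat.lt_floor_add_one (p / g0)
        rw [hi]; push_cast; linarith
      calc p = (p/g0) * g0 := by field_simp
        _ < i * g0 := by apply mul_lt_mul_of_pos_right h2 hg0pos
    have hig2 : (i:ℝ) * g0 < q := by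
      have h1 : (0:ℝ) ≤ p / g0 := div_nonneg hp hg0pos.le
      have h2 : (⌊p / g0⌋₊ : ℝ) ≤ p / g0 := Nat.floor_le h1
      have h3 : (i:ℝ) ≤ p/g0 + 1 := by rw [hi]; push_cast; linarith
      have h4 : (i:ℝ) * g0 ≤ (p/g0 + 1) * g0 := mul_le_mul_of_nonneg_right h3 hg0pos.le
      have h5 : (p/g0 + 1) * g0 = p + g0 := by field_simp
      linarith
    have higpos : 0 ≤ (i:ℝ) * g0 := by positivity
    have higlt1 : (i:ℝ) * g0 < 1 := by linarith
    set K' : ℕ := k.toNat with hK'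
    have hkt : (K' : ℤ) = k := Int.toNat_of_nonneg (by omega)
    have hkR : (K' : ℝ) = (k:ℝ) := by exact_mod_cast hkt
    have hK1 : 1 ≤ K' := by omega
    refine ⟨i * K', Nat.one_le_iff_ne_zero.mpr (by positivity), ?_, ?_⟩
    all_goals {
      have hma : Int.fract (((i * K' : ℕ):ℝ) * α) = i * g0 := by
        have hstep : ((i * K' : ℕ):ℝ) * α = (i:ℝ) * g0 + ((-((i:ℤ) * j) : ℤ) : ℝ) := by
          have h1 : ((i * K' : ℕ):ℝ) = (i:ℝ) * (K':ℝ) := Nat.cast_mul i K'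
          have h2 : ((-((i:ℤ) * j) : ℤ):ℝ) = -((i:ℝ) * (j:ℝ)) := by
            rw [Int.cast_neg, Int.cast_mul, Int.cast_natCast]
          have hka : (K':ℝ) * α = g0 - j := by rw [hkR, hgeq]; ring
          rw [h1, h2, mul_assoc, hka]; ring
        rw [hstep, Int.fract_add_intCast, Int.fract_eq_self.mpr ⟨higpos, higlt1⟩]
      rw [hma]
      linarith }

/-- digit of a point on the circle -/
noncomputable def dig (b : ℕ) (t : ℝ) : ℕ := (⌊(b:ℝ) ^ t⌋).toNat

section digprops
variable {b : ℕ} (hb : 5 ≤ b)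
include hb

lemma hb1R : (1:ℝ) < (b:ℕ) := by exact_mod_cast (show (1:ℕ) < b by omega)

lemma hb0R : (0:ℝ) < (b:ℕ) := by linarith [hb1R hb]

lemma rpow_one_le {t : ℝ} (ht : 0 ≤ t) : (1:ℝ) ≤ (b:ℝ) ^ t :=
  Real.one_le_rpow (le_of_lt (hb1R hb)) ht

lemma dig_cast {t : ℝ} (ht : 0 ≤ t) : (dig b t : ℝ) = (⌊(b:ℝ) ^ t⌋ : ℝ) := by
  have h0 : (0:ℤ) ≤ ⌊(b:ℝ) ^ t⌋ := Int.floor_nonneg.mpr (by linarith [rpow_one_le hb ht])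
  rw [dig]
  exact_mod_cast congrArg (fun z : ℤ => (z : ℝ)) (Int.toNat_of_nonneg h0)

lemma dig_cast_le {t : ℝ} (ht : 0 ≤ t) : (dig b t : ℝ) ≤ (b:ℝ) ^ t := by
  rw [dig_cast hb ht]; exact Int.floor_le _

lemma rpow_lt_dig_add_one {t : ℝ} (ht : 0 ≤ t) : (b:ℝ) ^ t < (dig b t : ℝ) + 1 := by
  rw [dig_cast hb ht]; exact Int.lt_floor_add_one _

lemma dig_one_le {t : ℝ} (ht : 0 ≤ t) : 1 ≤ dig b t := by
  have := rpow_one_le hb ht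
  have h : (1:ℝ) ≤ (dig b t : ℝ) := by
    have := rpow_lt_dig_add_one hb ht
    have h2 : (0:ℝ) < (dig b t : ℝ) + 1 := by linarith
    have h3 : (0:ℤ) ≤ ⌊(b:ℝ) ^ t⌋ := Int.floor_nonneg.mpr (by linarith)
    rw [dig_cast hb ht]
    exact_mod_cast Int.le_floor.mpr (by push_cast; linarith)
  exact_mod_cast h

lemma dig_lt {t : ℝ} (ht : 0 ≤ t) (ht1 : t < 1) : dig b t < b := by
  have h1 : (b:ℝ) ^ t < (b:ℝ) ^ (1:ℝ) := (Real.rpow_lt_rpow_left_iff (hb1R hb)).mpr ht1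
  rw [Real.rpow_one] at h1
  have h2 : (dig b t : ℝ) < b := lt_of_le_of_lt (dig_cast_le hb ht) h1
  exact_mod_cast h2

lemma le_dig_iff {e : ℕ} (he : 1 ≤ e) {t : ℝ} (ht : 0 ≤ t) :
    e ≤ dig b t ↔ Real.logb b e ≤ t := by
  have heR : (0:ℝ) < e := by exact_mod_cast he
  rw [Real.logb_le_iff_le_rpow (hb1R hb) heR]
  constructor
  · intro h
    have : (e:ℝ) ≤ dig b t := by exact_mod_cast h
    linarith [dig_cast_le hb ht]
  · intro h
    have h2 : (e:ℝ) < (dig b t : ℝ) + 1 := lt_of_le_of_lt h (rpow_lt_dig_add_one hb ht)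
    have : (e:ℤ) < (dig b t : ℤ) + 1 := by exact_mod_cast h2
    omega

lemma dig_close {u v : ℝ} (hu : 0 ≤ u) (hu1 : u < 1) (hv : 0 ≤ v) (hv1 : v < 1)
    (h : dig b u = dig b v) : |u - v| < 1/2 := by
  have hb1 := hb1R hb
  have hhalf : (2:ℝ) < (b:ℝ) ^ ((1:ℝ)/2) := by
    have h4 : (4:ℝ) < b := by exact_mod_cast (show (4:ℕ) < b by omega)
    have : ((b:ℝ) ^ ((1:ℝ)/2)) ^ (2:ℕ) = (b:ℝ) := by
      rw [← Real.rpow_natCast ((b:ℝ) ^ ((1:ℝ)/2)) 2, ← Real.rpow_mul (by linarith)]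
      norm_num
    nlinarith [Real.rpow_nonneg (le_of_lt (by linarith : (0:ℝ) < b)) ((1:ℝ)/2)]
  set d := dig b u with hd
  have hd1 : 1 ≤ d := dig_one_le hb hu
  have hdR : (1:ℝ) ≤ (d:ℝ) := by exact_mod_cast hd1
  have k1 : (d:ℝ) ≤ (b:ℝ) ^ u := dig_cast_le hb hu
  have k2 : (b:ℝ) ^ u < d + 1 := rpow_lt_dig_add_one hb hu
  have k3 : (d:ℝ) ≤ (b:ℝ) ^ v := by rw [h]; exact dig_cast_le hb hv
  have k4 : (b:ℝ) ^ v < d + 1 := by rw [h]; exact rpow_lt_dig_add_one hb hv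
  have main : ∀ s t : ℝ, (d:ℝ) ≤ (b:ℝ) ^ s → (b:ℝ) ^ t < d + 1 → t - s < 1/2 := by
    intro s t h1 h2
    have hrat : (b:ℝ) ^ (t - s) < 2 := by
      rw [Real.rpow_sub (by linarith)]
      rw [div_lt_iff₀ (by linarith)]
      have : (d:ℝ) + 1 ≤ 2 * d := by linarith
      calc (b:ℝ) ^ t < d + 1 := h2
        _ ≤ 2 * d := this
        _ ≤ 2 * (b:ℝ) ^ s := by linarith
    have : (b:ℝ) ^ (t - s) < (b:ℝ) ^ ((1:ℝ)/2) := by linarith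
    exact (Real.rpow_lt_rpow_left_iff hb1).mp this
  rw [abs_sub_lt_iff]
  exact ⟨main v u k3 k2, main u v k1 k4⟩

lemma dig_mono {t s : ℝ} (ht : 0 ≤ t) (hts : t ≤ s) : dig b t ≤ dig b s := by
  have hs : 0 ≤ s := le_trans ht hts
  have h1 : (dig b t : ℝ) ≤ (b:ℝ) ^ t := dig_cast_le hb ht
  have h2 : (b:ℝ) ^ t ≤ (b:ℝ) ^ s := (Real.rpow_le_rpow_left_iff (hb1R hb)).mpr hts
  have h3 : (b:ℝ) ^ s < (dig b s : ℝ) + 1 := rpow_lt_dig_add_one hb hs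
  have : (dig b t : ℝ) < (dig b s : ℝ) + 1 := by linarith
  exact_mod_cast Nat.lt_add_one_iff.mp (by exact_mod_cast this)

end digprops

lemma fract_shift (w c : ℝ) : Int.fract (Int.fract w + c) = Int.fract (w + c) := by
  have : Int.fract w + c = (w + c) - (⌊w⌋ : ℤ) := by rw [Int.fract]; ring
  rw [this, Int.fract_sub_intCast]

lemma leading_eq (b a : ℕ) (hb : 5 ≤ b) (ha : b < a) (m : ℕ) :
    leadingDigit b ((a:ℝ) ^ m) = dig b (Int.fract ((m:ℝ) * Real.logb b a)) := by
  have hb1 : (1:ℝ) < b := hb1R hb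
  have hb0 : (0:ℝ) < b := by linarith
  have hbne : (b:ℝ) ≠ 1 := by linarith
  have ha0 : (0:ℝ) < a := by exact_mod_cast (show (0:ℕ) < a by omega)
  set α := Real.logb b a with hα
  have hx : ((a:ℝ)) ^ m = (b:ℝ) ^ ((m:ℝ) * α) := by
    rw [mul_comm, Real.rpow_mul hb0.le, Real.rpow_logb hb0 hbne ha0, Real.rpow_natCast]
  have hlog : Real.logb b ((a:ℝ) ^ m) = (m:ℝ) * α := by
    rw [hx, Real.logb_rpow hb0 hbne]
  have hdiv : (a:ℝ) ^ m / (b:ℝ) ^ ((⌊(m:ℝ) * α⌋ : ℤ)) = (b:ℝ) ^ (Int.fract ((m:ℝ) * α)) := by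
    rw [hx, ← Real.rpow_intCast (b:ℝ) (⌊(m:ℝ) * α⌋ : ℤ), ← Real.rpow_sub hb0,
      Int.self_sub_floor]
  rw [leadingDigit, hlog, hdiv, dig]

/-- the word read at point `x` -/
noncomputable def wrd (b n : ℕ) (α x : ℝ) : Fin n → ℕ :=
  fun i => dig b (Int.fract (x + ((i : ℕ) : ℝ) * α))

/-- the boundary set -/
noncomputable def bset (b n : ℕ) (α : ℝ) : Finset ℝ := by
  classical
  exact ((Finset.Ico 1 b) ×ˢ (Finset.range n)).image
    (fun p => Int.fract (Real.logb b p.1 - p.2 * α))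

lemma bset_subset (b n : ℕ) (α : ℝ) : ∀ β ∈ bset b n α, 0 ≤ β ∧ β < 1 := by
  intro β hβ
  rw [bset] at hβ
  simp only [Finset.mem_image] at hβ
  obtain ⟨p, _, rfl⟩ := hβ
  exact ⟨Int.fract_nonneg _, Int.fract_lt_one _⟩

lemma zero_mem_bset (b n : ℕ) (hb : 5 ≤ b) (hn : 1 ≤ n) (α : ℝ) : (0:ℝ) ∈ bset b n α := by
  rw [bset]
  simp only [Finset.mem_image]
  refine ⟨(1, 0), ?_, ?_⟩
  · simp [Finset.mem_product, Finset.mem_Ico, Finset.mem_range]; omega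
  · simp [Real.logb_one]

lemma bset_inj (b a n : ℕ) (hb : 5 ≤ b) (ha : b < a) (hco : Nat.gcd a b = 1) :
    ∀ d i d' i' : ℕ, 1 ≤ d → d < b → 1 ≤ d' → d' < b →
    Int.fract (Real.logb b d - i * Real.logb b a) =
      Int.fract (Real.logb b d' - i' * Real.logb b a) → d = d' ∧ i = i' := by
  intro d i d' i' hd hd2 hd' hd2' h
  obtain ⟨z, hz⟩ := Int.fract_eq_fract.mp h
  have hK : Real.logb b d = Real.logb b d' + ((((i:ℤ) - (i':ℤ)) : ℤ):ℝ) * Real.logb b a + z := by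
    push_cast
    linear_combination hz
  obtain ⟨h1, h2⟩ := keyLogb b a hb ha hco hd hd2 hd' hd2' ((i:ℤ) - (i':ℤ)) z hK
  exact ⟨h1, by omega⟩

lemma bset_card (b a n : ℕ) (hb : 5 ≤ b) (ha : b < a) (hco : Nat.gcd a b = 1) :
    (bset b n (Real.logb b a)).card = (b - 1) * n := by
  classical
  rw [bset]
  rw [Finset.card_image_of_injOn]
  · rw [Finset.card_product, Nat.card_Ico, Finset.card_range]
  · intro p hp q hq hpq
    simp only [Finset.coe_product, Set.mem_prod, Finset.mem_coe, Finset.mem_Ico,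
      Finset.mem_range] at hp hq
    obtain ⟨h1, h2⟩ := bset_inj b a n hb ha hco p.1 p.2 q.1 q.2 hp.1.1 hp.1.2 hq.1.1 hq.1.2 hpq
    exact Prod.ext h1 h2

lemma word_eq_of_no_boundary (b n : ℕ) (hb : 5 ≤ b) (α x y : ℝ)
    (hx0 : 0 ≤ x) (hy1 : y < 1) (hxy : x ≤ y)
    (hno : ∀ β ∈ bset b n α, ¬(x < β ∧ β ≤ y)) :
    wrd b n α x = wrd b n α y := by
  classical
  funext i
  set u := Int.fract (x + ((i:ℕ):ℝ) * α) with hu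
  have hu0 : 0 ≤ u := Int.fract_nonneg _
  have hu1 : u < 1 := Int.fract_lt_one _
  set δ := y - x with hδ
  have hδ0 : 0 ≤ δ := by simp [hδ]; linarith
  have hδ1 : δ < 1 := by simp [hδ]; linarith
  have hufl : u = x + ((i:ℕ):ℝ) * α - (⌊x + ((i:ℕ):ℝ) * α⌋ : ℤ) :=
    (Int.self_sub_floor _).symm
  have hvv : Int.fract (y + ((i:ℕ):ℝ) * α) = Int.fract (u + δ) := by
    rw [hu, fract_shift]
    congr 1
    ring
  have hwrap : u + δ < 1 := by
    by_contra hw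
    push_neg at hw
    set β := x + (1 - u) with hβ
    have hβx : x < β := by simp [hβ]; linarith
    have hβy : β ≤ y := by simp [hβ]; linarith
    refine hno β ?_ ⟨hβx, hβy⟩
    rw [bset]
    simp only [Finset.mem_image]
    refine ⟨(1, (i:ℕ)), ?_, ?_⟩
    · simp only [Finset.mem_product, Finset.mem_Ico, Finset.mem_range]
      exact ⟨⟨le_rfl, by omega⟩, i.2⟩
    · have hcomp : Real.logb b ((1:ℕ):ℝ) - ((i:ℕ):ℝ) * α
          = β - ((⌊x + ((i:ℕ):ℝ) * α⌋ + 1 : ℤ) : ℝ) := by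
        push_cast [Real.logb_one]
        rw [hβ]
        linarith [hufl]
      rw [hcomp]
      have : Int.fract (β - ((⌊x + ((i:ℕ):ℝ) * α⌋ + 1 : ℤ) : ℝ)) = Int.fract β :=
        Int.fract_sub_intCast _ _
      rw [this]
      exact Int.fract_eq_self.mpr ⟨by linarith, by linarith⟩
  -- no wrap: v = u + δ
  have hv2 : Int.fract (y + ((i:ℕ):ℝ) * α) = u + δ := by
    rw [hvv]
    exact Int.fract_eq_self.mpr ⟨by linarith, hwrap⟩
  show dig b u = dig b (Int.fract (y + ((i:ℕ):ℝ) * α))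
  rw [hv2]
  by_contra hne
  have hv0 : (0:ℝ) ≤ u + δ := by linarith
  have hmono : dig b u ≤ dig b (u + δ) := dig_mono hb hu0 (by linarith)
  set e := dig b (u + δ) with he
  have he1 : 1 ≤ e := dig_one_le hb hv0
  have heb : e < b := dig_lt hb hv0 hwrap
  have hlt : dig b u < e := lt_of_le_of_ne hmono hne
  set c := Real.logb b e with hc
  have hce : c ≤ u + δ := by
    rw [hc]
    exact (le_dig_iff hb he1 hv0).mp le_rfl
  have hcu : u < c := by
    by_contra h'
    push_neg at h'
    have : e ≤ dig b u := (le_dig_iff hb he1 hu0).mpr h'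
    omega
  set β := x + (c - u) with hβ
  have hβx : x < β := by simp [hβ]; linarith
  have hβy : β ≤ y := by simp [hβ]; linarith
  refine absurd (hno β ?_ ⟨hβx, hβy⟩) (by simp)
  rw [bset]
  simp only [Finset.mem_image]
  refine ⟨(e, (i:ℕ)), ?_, ?_⟩
  · simp only [Finset.mem_product, Finset.mem_Ico, Finset.mem_range]
    exact ⟨⟨he1, heb⟩, i.2⟩
  · have hcomp : Real.logb b ((e:ℕ):ℝ) - ((i:ℕ):ℝ) * α
        = β - ((⌊x + ((i:ℕ):ℝ) * α⌋ : ℤ) : ℝ) := by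
      rw [hβ, ← hc]
      linarith [hufl]
    rw [hcomp, Int.fract_sub_intCast]
    exact Int.fract_eq_self.mpr ⟨by linarith, by linarith⟩

lemma word_ne_of_boundary (b n : ℕ) (hb : 5 ≤ b) (hn : 1 ≤ n) (α x y β : ℝ)
    (hx0 : 0 ≤ x) (hy1 : y < 1) (hxy : x ≤ y)
    (hβ : β ∈ bset b n α) (hβ1 : x < β) (hβ2 : β ≤ y) :
    wrd b n α x ≠ wrd b n α y := by
  classical
  intro weq
  have hx1 : x < 1 := lt_of_le_of_lt hxy hy1
  have hy0 : 0 ≤ y := le_trans hx0 hxy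
  set δ := y - x with hδ
  have hδpos : 0 < δ := by simp [hδ]; linarith
  have hδ1 : δ < 1 := by simp [hδ]; linarith
  -- position 0 : δ < 1/2
  have h0 := congrFun weq ⟨0, hn⟩
  have h0' : dig b x = dig b y := by
    simpa [wrd, Int.fract_eq_self.mpr ⟨hx0, hx1⟩, Int.fract_eq_self.mpr ⟨hy0, hy1⟩] using h0
  have hδhalf : δ < 1/2 := by
    have := dig_close hb hx0 hx1 hy0 hy1 h0'
    rw [abs_sub_lt_iff] at this
    linarith [this.2]
  -- boundary data
  rw [bset] at hβ
  simp only [Finset.mem_image, Finset.mem_product, Finset.mem_Ico, Finset.mem_range] at hβ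
  obtain ⟨⟨dst, ist⟩, ⟨⟨hd1, hd2⟩, hin⟩, hβeq⟩ := hβ
  dsimp only at hβeq hin hd1 hd2
  set u := Int.fract (x + (ist:ℝ) * α) with hu
  have hu0 : 0 ≤ u := Int.fract_nonneg _
  have hu1 : u < 1 := Int.fract_lt_one _
  have hufl : u = x + (ist:ℝ) * α - (⌊x + (ist:ℝ) * α⌋ : ℤ) := (Int.self_sub_floor _).symm
  set v := Int.fract (y + (ist:ℝ) * α) with hv
  have hv0 : 0 ≤ v := Int.fract_nonneg _
  have hdig : dig b u = dig b v := by
    have := congrFun weq ⟨ist, hin⟩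
    simpa [wrd] using this
  have hclose : |u - v| < 1/2 := dig_close hb hu0 hu1 hv0 (Int.fract_lt_one _) hdig
  have hvv : v = Int.fract (u + δ) := by
    rw [hv, hu, fract_shift]
    congr 1
    ring
  set c := Real.logb b dst with hc
  have hb1 : (1:ℝ) < b := hb1R hb
  have hdR : (1:ℝ) ≤ (dst:ℝ) := by exact_mod_cast hd1
  have hc0 : 0 ≤ c := Real.logb_nonneg hb1 hdR
  have hc1 : c < 1 := by
    rw [hc, Real.logb_lt_iff_lt_rpow hb1 (by linarith), Real.rpow_one]
    exact_mod_cast hd2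
  -- c = fract (u + (β - x))
  have hβfl : β = c - (ist:ℝ) * α - (⌊c - (ist:ℝ) * α⌋ : ℤ) := by
    rw [← hβeq]; exact (Int.self_sub_floor _).symm
  have hcfract : Int.fract (u + (β - x)) = c := by
    have hcomp : u + (β - x) = c + ((⌊x + (ist:ℝ) * α⌋ : ℤ) - (⌊c - (ist:ℝ) * α⌋ : ℤ)
        - 2 * (⌊x + (ist:ℝ) * α⌋ : ℤ) : ℤ) := by
      push_cast
      rw [hufl, hβfl]
      ring
    rw [hcomp, Int.fract_add_intCast, Int.fract_eq_self.mpr ⟨hc0, hc1⟩]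
  have hβx' : 0 < β - x := by linarith
  have hβδ : β - x ≤ δ := by simp [hδ]; linarith
  by_cases hw : u + δ < 1
  · have hv2 : v = u + δ := by
      rw [hvv]; exact Int.fract_eq_self.mpr ⟨by linarith, hw⟩
    have hcval : c = u + (β - x) := by
      rw [← hcfract]
      exact Int.fract_eq_self.mpr ⟨by linarith, by linarith⟩
    have hdt1 : dst ≤ dig b v := by
      rw [le_dig_iff hb hd1 hv0, ← hc]
      linarith
    have hdt2 : dig b u < dst := by
      by_contra h'
      push_neg at h'
      have := (le_dig_iff hb hd1 hu0).mp h'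
      rw [← hc] at this
      linarith
    omega
  · push_neg at hw
    have hv2 : v = u + δ - 1 := by
      have h1 : Int.fract (u + δ) = Int.fract (u + δ - ((1:ℤ):ℝ)) := (Int.fract_sub_intCast _ _).symm
      rw [hvv, h1]
      push_cast
      exact Int.fract_eq_self.mpr ⟨by linarith, by linarith⟩
    rw [abs_sub_lt_iff] at hclose
    have := hclose.1
    rw [hv2] at this
    linarith

open Classical in
/-- greatest element of `s` that is `≤ x` (when `0 ∈ s` and `0 ≤ x`) -/
noncomputable def phi (s : Finset ℝ) (x : ℝ) : ℝ :=
  WithBot.unbotD 0 ((s.filter (fun p => p ≤ x)).max)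

lemma phi_spec (s : Finset ℝ) (x : ℝ) (h0 : (0:ℝ) ∈ s) (hx : 0 ≤ x) :
    phi s x ∈ s ∧ phi s x ≤ x ∧ ∀ p ∈ s, p ≤ x → p ≤ phi s x := by
  classical
  have hne : (s.filter (fun p => p ≤ x)).Nonempty := ⟨0, Finset.mem_filter.mpr ⟨h0, hx⟩⟩
  have hval : phi s x = (s.filter (fun p => p ≤ x)).max' hne := by
    rw [phi, ← Finset.coe_max' hne]
    rfl
  have hmem := Finset.max'_mem _ hne
  rw [Finset.mem_filter] at hmem
  refine ⟨by rw [hval]; exact hmem.1, by rw [hval]; exact hmem.2, ?_⟩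
  intro p hp hpx
  rw [hval]
  exact Finset.le_max' (s.filter (fun r => r ≤ x)) p (Finset.mem_filter.mpr ⟨hp, hpx⟩)

lemma phi_self (s : Finset ℝ) (p : ℝ) (h0 : (0:ℝ) ∈ s) (hp : p ∈ s) (hp0 : 0 ≤ p) :
    phi s p = p := by
  obtain ⟨h1, h2, h3⟩ := phi_spec s p h0 hp0
  exact le_antisymm h2 (h3 p hp le_rfl)

lemma word_eq_iff_aux (b n : ℕ) (hb : 5 ≤ b) (hn : 1 ≤ n) (α x y : ℝ)
    (hx0 : 0 ≤ x) (hx1 : x < 1) (hy0 : 0 ≤ y) (hy1 : y < 1) (hxy : x ≤ y) :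
    wrd b n α x = wrd b n α y ↔ phi (bset b n α) x = phi (bset b n α) y := by
  have h0B : (0:ℝ) ∈ bset b n α := zero_mem_bset b n hb hn α
  obtain ⟨hPmem, hPle, hPmax⟩ := phi_spec _ x h0B hx0
  obtain ⟨hQmem, hQle, hQmax⟩ := phi_spec _ y h0B hy0
  constructor
  · intro weq
    have h1 : phi (bset b n α) x ≤ phi (bset b n α) y :=
      hQmax _ hPmem (le_trans hPle hxy)
    have h2 : phi (bset b n α) y ≤ x := by
      by_contra h'
      push_neg at h'
      exact word_ne_of_boundary b n hb hn α x y _ hx0 hy1 hxy hQmem h' hQle weq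
    exact le_antisymm h1 (hPmax _ hQmem h2)
  · intro peq
    apply word_eq_of_no_boundary b n hb α x y hx0 hy1 hxy
    intro β hβ ⟨hβ1, hβ2⟩
    have : β ≤ phi (bset b n α) y := hQmax β hβ hβ2
    rw [← peq] at this
    linarith [hPle]

lemma word_eq_iff (b n : ℕ) (hb : 5 ≤ b) (hn : 1 ≤ n) (α x y : ℝ)
    (hx0 : 0 ≤ x) (hx1 : x < 1) (hy0 : 0 ≤ y) (hy1 : y < 1) :
    wrd b n α x = wrd b n α y ↔ phi (bset b n α) x = phi (bset b n α) y := by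
  rcases le_total x y with h | h
  · exact word_eq_iff_aux b n hb hn α x y hx0 hx1 hy0 hy1 h
  · rw [eq_comm, eq_comm (a := phi (bset b n α) x)]
    exact word_eq_iff_aux b n hb hn α y x hy0 hy1 hx0 hx1 h


/-- For squarefree `b ≥ 5` and an integer `a > b` with `gcd(a,b) = 1`,
`p_{a,b}(n) = (b-1)·n` for all `n ≥ 1`. -/
theorem blockComplexity_int_gt (b a : ℕ) (hb : 5 ≤ b) (hsf : Squarefree b)
    (ha : b < a) (hco : Nat.gcd a b = 1) :
    ∀ n : ℕ, 1 ≤ n → blockComplexity (a : ℝ) b n = (b - 1) * n := by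
  intro n hn
  classical
  set α := Real.logb b a with hα
  set B := bset b n α with hB
  have h0B : (0:ℝ) ∈ B := zero_mem_bset b n hb hn α
  have hBmem : ∀ β ∈ B, 0 ≤ β ∧ β < 1 := bset_subset b n α
  -- the word of an orbit point
  have horb : ∀ m : ℕ, ∀ i : Fin n,
      leadingDigit b ((a:ℝ) ^ (m + (i:ℕ))) = wrd b n α (Int.fract ((m:ℝ) * α)) i := by
    intro m i
    rw [leading_eq b a hb ha (m + (i:ℕ)), wrd]
    congr 1
    rw [fract_shift]
    congr 1
    push_cast
    ring
  -- identify phi-idempotence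
  have hphiself : ∀ p ∈ B, phi B p = p := fun p hp =>
    phi_self B p h0B hp (hBmem p hp).1
  -- the block set equals the image of the boundary set
  have hS : {w : Fin n → ℕ |
      ∃ m : ℕ, 1 ≤ m ∧ ∀ i : Fin n, w i = leadingDigit b ((a:ℝ) ^ (m + (i : ℕ)))}
      = (wrd b n α) '' ↑B := by
    ext w
    simp only [Set.mem_setOf_eq, Set.mem_image, Finset.mem_coe]
    constructor
    · rintro ⟨m, hm, hw⟩
      set x := Int.fract ((m:ℝ) * α) with hx
      have hx0 : 0 ≤ x := Int.fract_nonneg _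
      have hx1 : x < 1 := Int.fract_lt_one _
      have hweq : w = wrd b n α x := funext fun i => (hw i).trans (horb m i)
      obtain ⟨hPmem, hPle, hPmax⟩ := phi_spec B x h0B hx0
      refine ⟨phi B x, hPmem, ?_⟩
      rw [hweq]
      have := (word_eq_iff b n hb hn α x (phi B x) hx0 hx1
        (hBmem _ hPmem).1 (hBmem _ hPmem).2).mpr
      exact (this (by rw [hphiself _ hPmem])).symm
    · rintro ⟨p, hpB, rfl⟩
      have hp0 : 0 ≤ p := (hBmem p hpB).1
      have hp1 : p < 1 := (hBmem p hpB).2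
      set T := insert (1:ℝ) (B.filter (fun r => p < r)) with hT
      have hTne : T.Nonempty := ⟨1, Finset.mem_insert_self _ _⟩
      set q := T.min' hTne with hq
      have hq1 : q ≤ 1 := Finset.min'_le T 1 (Finset.mem_insert_self _ _)
      have hpq : p < q := by
        have hall : ∀ r ∈ T, p < r := by
          intro r hr
          rw [hT, Finset.mem_insert] at hr
          rcases hr with h | h
          · rw [h]; exact hp1
          · exact (Finset.mem_filter.mp h).2
        exact hall q (Finset.min'_mem T hTne)
      obtain ⟨m, hm1, hm2, hm3⟩ := dense_orbit α (irrational_alpha b a hb ha hco) p q hp0 hpq hq1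
      set x := Int.fract ((m:ℝ) * α) with hx
      have hx0 : 0 ≤ x := Int.fract_nonneg _
      have hx1 : x < 1 := Int.fract_lt_one _
      obtain ⟨hPmem, hPle, hPmax⟩ := phi_spec B x h0B hx0
      have hphix : phi B x = p := by
        refine le_antisymm ?_ (hPmax p hpB (le_of_lt hm2))
        by_contra h'
        push_neg at h'
        have hTmem : phi B x ∈ T := by
          rw [hT, Finset.mem_insert]
          exact Or.inr (Finset.mem_filter.mpr ⟨hPmem, h'⟩)
        have := Finset.min'_le T _ hTmem
        rw [← hq] at this
        linarith
      have hww : wrd b n α x = wrd b n α p := by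
        rw [word_eq_iff b n hb hn α x p hx0 hx1 hp0 hp1, hphix, hphiself p hpB]
      exact ⟨m, hm1, fun i => by rw [← hww]; exact (horb m i).symm⟩
  rw [blockComplexity, hS, Set.ncard_image_of_injOn, Set.ncard_coe_finset, hB,
    bset_card b a n hb ha hco]
  -- injectivity on B
  intro p hp p' hp' hww
  rw [Finset.mem_coe] at hp hp'
  have := (word_eq_iff b n hb hn α p p' (hBmem p hp).1 (hBmem p hp).2
    (hBmem p' hp').1 (hBmem p' hp').2).mp hww
  rw [hphiself p hp, hphiself p' hp'] at this
  exact this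
end

section
/- Let b be a squarefree integer ≥ 5. Then the block complexity of the leading digit sequence of 2^n in base b is p_{2,b}(n) = ⌊(b−1)/2⌋·n + ⌈(b−1)/2⌉ for all n ≥ 1. -/
open Real Int Set

namespace BC

variable {b : ℕ}

noncomputable def al (b : ℕ) : ℝ := Real.logb b 2
noncomputable def be (b : ℕ) (d : ℕ) : ℝ := Real.logb b d
noncomputable def Dg (b : ℕ) (t : ℝ) : ℕ := ⌊(b : ℝ) ^ t⌋₊

lemma one_lt_B (hb : 5 ≤ b) : (1:ℝ) < (b:ℝ) := by
  have : (5:ℝ) ≤ b := by exact_mod_cast hb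
  linarith

lemma B_pos (hb : 5 ≤ b) : (0:ℝ) < (b:ℝ) := lt_trans one_pos (one_lt_B hb)

lemma B_ne_one (hb : 5 ≤ b) : (b:ℝ) ≠ 1 := ne_of_gt (one_lt_B hb)

lemma al_pos (hb : 5 ≤ b) : 0 < al b := Real.logb_pos (one_lt_B hb) (by norm_num)

lemma al_lt_half (hb : 5 ≤ b) : al b < 1/2 := by
  rw [al, Real.logb_lt_iff_lt_rpow (one_lt_B hb) (by norm_num)]
  have h4 : (4:ℝ) < b := by
    have : (5:ℝ) ≤ b := by exact_mod_cast hb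
    linarith
  have hsq : ((b:ℝ) ^ (1/2 : ℝ)) ^ (2:ℕ) = (b:ℝ) := by
    rw [← Real.rpow_natCast ((b:ℝ) ^ (1/2:ℝ)) 2, ← Real.rpow_mul (by positivity)]
    norm_num
  have h2 : (0:ℝ) ≤ (b:ℝ) ^ (1/2:ℝ) := by positivity
  nlinarith [hsq]

lemma al_lt_one (hb : 5 ≤ b) : al b < 1 := lt_trans (al_lt_half hb) (by norm_num)



-- squarefree consequences
lemma sf_cases (hsf : Squarefree b) :
    ¬ 2 ∣ b ∨ (b = 2 * (b/2) ∧ ¬ 2 ∣ (b/2)) := by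
  have h4 : ¬ (4 ∣ b) := by
    intro h
    have := hsf 2 (by omega)
    rw [Nat.isUnit_iff] at this
    omega
  omega

-- 2^p = b^q with p q ≥ 1 impossible
lemma pow_ne (hb : 5 ≤ b) (hsf : Squarefree b) {p q : ℕ} (hp : 1 ≤ p) (hq : 1 ≤ q) :
    2 ^ p ≠ b ^ q := by
  intro h
  rcases sf_cases hsf with hodd | ⟨hbe, hco⟩
  · have h2 : 2 ∣ 2^p := dvd_pow_self 2 (by omega)
    rw [h] at h2
    have := (Nat.Prime.dvd_of_dvd_pow Nat.prime_two h2)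
    omega
  · set c := b / 2 with hc
    have hcb : c ∣ b := ⟨2, by omega⟩
    have hc2 : c ∣ 2 ^ p := by
      rw [h]; exact hcb.trans (dvd_pow_self b (by omega))
    have hcop : Nat.Coprime c 2 := by
      rw [Nat.coprime_two_right, Nat.odd_iff]
      omega
    have hc1 : c = 1 := (hcop.pow_right p).eq_one_of_dvd hc2
    omega

-- key irrationality: z * al b ≠ w for z ≠ 0
lemma irr_al (hb : 5 ≤ b) (hsf : Squarefree b) :
    ∀ z w : ℤ, z ≠ 0 → (z : ℝ) * al b ≠ (w : ℝ) := by
  have key : ∀ p q : ℕ, 1 ≤ p → 1 ≤ q → ((2:ℝ)) ^ p ≠ (b:ℝ) ^ q := by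
    intro p q hp hq h
    have : ((2^p : ℕ) : ℝ) = ((b^q : ℕ) : ℝ) := by push_cast; exact_mod_cast h
    exact pow_ne hb hsf hp hq (by exact_mod_cast this)
  have hpos : ∀ z w : ℤ, 0 < z → (z : ℝ) * al b ≠ (w : ℝ) := by
    intro z w hz h
    have halpos := al_pos hb
    have halone := al_lt_one hb
    have hw : 0 < w := by
      have : (0:ℝ) < (z:ℝ) * al b := by
        apply mul_pos _ halpos
        exact_mod_cast hz
      rw [h] at this
      exact_mod_cast this
    have hlogb : Real.log b ≠ 0 :=
      Real.log_ne_zero_of_pos_of_ne_one (B_pos hb) (B_ne_one hb)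
    have h2 : (z:ℝ) * Real.log 2 = (w:ℝ) * Real.log b := by
      rw [al, Real.logb] at h
      field_simp at h
      linarith [h]
    have hzn : (z.toNat : ℝ) = (z : ℝ) := by exact_mod_cast Int.toNat_of_nonneg hz.le
    have hwn : (w.toNat : ℝ) = (w : ℝ) := by exact_mod_cast Int.toNat_of_nonneg hw.le
    have h3 : Real.log ((2:ℝ) ^ z.toNat) = Real.log ((b:ℝ) ^ w.toNat) := by
      rw [Real.log_pow, Real.log_pow, hzn, hwn]
      exact h2
    have h4 : ((2:ℝ)) ^ z.toNat = (b:ℝ) ^ w.toNat := by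
      have h2p : (0:ℝ) < (2:ℝ) ^ z.toNat := by positivity
      have hbp : (0:ℝ) < (b:ℝ) ^ w.toNat := by positivity
      exact Real.log_injOn_pos (mem_Ioi.2 h2p) (mem_Ioi.2 hbp) h3
    exact key z.toNat w.toNat (by omega) (by omega) h4
  intro z w hz h
  rcases lt_or_gt_of_ne hz with hneg | hposz
  · apply hpos (-z) (-w) (by omega)
    push_cast
    linarith [h]
  · exact hpos z w hposz h

-- digit lemmas
lemma be_le_iff (hb : 5 ≤ b) {d : ℕ} (hd : 1 ≤ d) (t : ℝ) :
    be b d ≤ t ↔ d ≤ Dg b t := by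
  rw [Dg, Nat.le_floor_iff (by positivity), be]
  rw [Real.logb_le_iff_le_rpow (one_lt_B hb) (by exact_mod_cast hd)]

lemma lt_be_iff (hb : 5 ≤ b) {d : ℕ} (hd : 1 ≤ d) (t : ℝ) :
    t < be b d ↔ Dg b t < d := by
  rw [← not_le, ← not_le, be_le_iff hb hd t]

lemma Dg_mono (hb : 5 ≤ b) {t t' : ℝ} (h : t ≤ t') : Dg b t ≤ Dg b t' := by
  apply Nat.floor_mono
  exact (Real.rpow_le_rpow_left_iff (one_lt_B hb)).2 h

lemma Dg_ge_one (hb : 5 ≤ b) {t : ℝ} (ht : 0 ≤ t) : 1 ≤ Dg b t := by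
  rw [← be_le_iff hb le_rfl, be]
  simpa using ht

lemma Dg_le (hb : 5 ≤ b) {t : ℝ} (ht : t < 1) : Dg b t ≤ b - 1 := by
  have : Dg b t < b := by
    rw [← lt_be_iff hb (by omega), be]
    have : Real.logb b b = 1 := Real.logb_self_eq_one (one_lt_B hb)
    rw [this]; exact ht
  omega

-- points in the same digit cell are < al b apart
lemma gap_lt (hb : 5 ≤ b) {u u' : ℝ} (hu : 0 ≤ u) (hu1 : u < 1) (hv : 0 ≤ u')
    (hv1 : u' < 1) (h : Dg b u = Dg b u') : |u - u'| < al b := by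
  set d := Dg b u with hd
  have hd1 : 1 ≤ d := Dg_ge_one hb hu
  have hdb : d ≤ b - 1 := Dg_le hb hu1
  have h1 : be b d ≤ u := (be_le_iff hb hd1 u).2 le_rfl
  have h2 : u < be b (d+1) := (lt_be_iff hb (by omega) u).2 (by omega)
  have h1' : be b d ≤ u' := (be_le_iff hb hd1 u').2 (by omega)
  have h2' : u' < be b (d+1) := (lt_be_iff hb (by omega) u').2 (by omega)
  have hgap : be b (d+1) - be b d ≤ al b := by
    rw [be, be, al]
    have hdpos : (0:ℝ) < (d:ℝ) := by exact_mod_cast hd1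
    rw [← Real.logb_div (by positivity) (by positivity)]
    apply Real.logb_le_logb_of_le (one_lt_B hb) (by positivity)
    have hd1' : (1:ℝ) ≤ (d:ℝ) := by exact_mod_cast hd1
    rw [div_le_iff₀ hdpos]
    push_cast
    linarith
  rw [abs_lt]
  constructor <;> nlinarith

-- leading digit of 2^m equals Dg of fract (m * al b)
lemma leadingDigit_eq (hb : 5 ≤ b) (m : ℕ) :
    leadingDigit b ((2:ℝ) ^ m) = Dg b (Int.fract (m * al b)) := by
  have hbpos := B_pos hb
  have hbne := B_ne_one hb
  have hlog : Real.logb b ((2:ℝ) ^ m) = (m:ℝ) * al b := by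
    rw [Real.logb_pow, al]
  set k : ℤ := ⌊(m:ℝ) * al b⌋ with hk
  have hx : (2:ℝ) ^ m = (b:ℝ) ^ ((m:ℝ) * al b) := by
    rw [mul_comm, Real.rpow_mul hbpos.le, al, Real.rpow_logb hbpos hbne (by norm_num),
      Real.rpow_natCast]
  have hdiv : (2:ℝ) ^ m / (b:ℝ) ^ (k:ℤ) = (b:ℝ) ^ (Int.fract ((m:ℝ) * al b)) := by
    rw [hx, ← Real.rpow_intCast (b:ℝ) k, ← Real.rpow_sub hbpos, Int.self_sub_floor]
  rw [leadingDigit, hlog, ← hk, hdiv, Int.floor_toNat, Dg]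

-- density of the forward orbit
lemma density (hb : 5 ≤ b) (hsf : Squarefree b) {u v : ℝ}
    (hu : 0 ≤ u) (huv : u < v) (hv : v ≤ 1) :
    ∃ m : ℕ, 1 ≤ m ∧ u < Int.fract ((m:ℝ) * al b) ∧ Int.fract ((m:ℝ) * al b) < v := by
  set α := al b with hα
  have hdense : Dense ((AddSubgroup.closure ({α, 1} : Set ℝ) : AddSubgroup ℝ) : Set ℝ) := by
    rcases AddSubgroup.dense_or_cyclic (AddSubgroup.closure ({α, 1} : Set ℝ)) with hd | ⟨a, ha⟩
    · exact hd
    · exfalso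
      have hα_mem : α ∈ AddSubgroup.closure ({α, 1} : Set ℝ) :=
        AddSubgroup.subset_closure (by simp)
      have h1_mem : (1:ℝ) ∈ AddSubgroup.closure ({α, 1} : Set ℝ) :=
        AddSubgroup.subset_closure (by simp)
      rw [ha, AddSubgroup.mem_closure_singleton] at hα_mem h1_mem
      obtain ⟨p, hp⟩ := hα_mem
      obtain ⟨q, hq⟩ := h1_mem
      rw [zsmul_eq_mul] at hp hq
      have hq0 : q ≠ 0 := by
        rintro rfl
        simp at hq
      apply irr_al hb hsf q p hq0
      calc (q:ℝ) * α = (q:ℝ) * ((p:ℝ) * a) := by rw [hp]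
        _ = (p:ℝ) * ((q:ℝ) * a) := by ring
        _ = (p:ℝ) := by rw [hq, mul_one]
  have hε : (0:ℝ) < v - u := by linarith
  obtain ⟨g, hgmem, hg⟩ := hdense.exists_between hε
  obtain ⟨hg0, hgε⟩ : 0 < g ∧ g < v - u := ⟨hg.1, hg.2⟩
  rw [SetLike.mem_coe, AddSubgroup.mem_closure_pair] at hgmem
  obtain ⟨p, q, hpq⟩ := hgmem
  rw [zsmul_eq_mul, zsmul_eq_mul, mul_one] at hpq
  -- hpq : p * α + q = g
  have hp0 : p ≠ 0 := by
    rintro rfl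
    simp only [Int.cast_zero, zero_mul, zero_add] at hpq
    rw [← hpq] at hg0 hgε
    have h1' : 0 < q := by exact_mod_cast hg0
    have h2'' : q < 1 := by
      have h2' : (q:ℝ) < 1 := by linarith
      exact_mod_cast h2'
    omega
  have hαpos := al_pos hb
  rcases lt_or_gt_of_ne hp0 with hpneg | hppos
  · -- p < 0 : use m = j * (-p), fract = 1 - j*g
    set j : ℤ := ⌊(1 - v)/g⌋ + 1 with hj
    have hj1 : 1 ≤ j := by
      have h0 : (0:ℤ) ≤ ⌊(1 - v)/g⌋ := Int.floor_nonneg.2 (div_nonneg (by linarith) hg0.le)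
      omega
    have hjg1 : 1 - v < (j:ℝ) * g := by
      have := Int.lt_floor_add_one ((1 - v)/g)
      calc 1 - v = ((1-v)/g) * g := by field_simp
        _ < ((⌊(1 - v)/g⌋ : ℝ) + 1) * g := by
            apply mul_lt_mul_of_pos_right _ hg0
            exact this
        _ = (j:ℝ) * g := by push_cast [hj]; ring
    have hjg2 : (j:ℝ) * g < 1 - u := by
      have hfl : (⌊(1 - v)/g⌋ : ℝ) ≤ (1-v)/g := Int.floor_le _
      calc (j:ℝ) * g = ((⌊(1 - v)/g⌋ : ℝ) + 1) * g := by push_cast [hj]; ring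
        _ ≤ ((1-v)/g + 1) * g := by
            apply mul_le_mul_of_nonneg_right _ hg0.le
            linarith
        _ = (1 - v) + g := by field_simp
        _ < 1 - u := by linarith
    have hjgpos : 0 < (j:ℝ) * g := by
      apply mul_pos _ hg0
      exact_mod_cast hj1
    have hjglt1 : (j:ℝ) * g < 1 := by linarith
    set m : ℤ := j * (-p) with hm
    have hm1 : 1 ≤ m := by
      have : 1 ≤ -p := by omega
      calc (1:ℤ) = 1 * 1 := by ring
        _ ≤ j * (-p) := by
          apply mul_le_mul hj1 this (by omega) (by omega)
    refine ⟨m.toNat, by omega, ?_⟩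
    have hmc : ((m.toNat : ℕ) : ℝ) = (m:ℝ) := by exact_mod_cast Int.toNat_of_nonneg (by omega)
    rw [hmc]
    have hmal : (m:ℝ) * α = -((j:ℝ) * g) + (j * q : ℤ) := by
      rw [hm]
      push_cast
      have : (p:ℝ) * α = g - q := by linarith [hpq]
      calc (j:ℝ) * (-(p:ℝ)) * α = -((j:ℝ) * ((p:ℝ) * α)) := by ring
        _ = -((j:ℝ) * (g - q)) := by rw [this]
        _ = -((j:ℝ) * g) + (j:ℝ) * (q:ℝ) := by ring
    have hfr : Int.fract ((m:ℝ) * α) = 1 - (j:ℝ) * g := by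
      rw [hmal, Int.fract_add_intCast, Int.fract_neg, Int.fract_eq_self.2 ⟨hjgpos.le, hjglt1⟩]
      rw [Int.fract_eq_self.2 ⟨hjgpos.le, hjglt1⟩]
      exact ne_of_gt hjgpos
    rw [hfr]
    constructor <;> linarith
  · -- p > 0 : use m = j * p, fract = j*g
    set j : ℤ := ⌊u/g⌋ + 1 with hj
    have hj1 : 1 ≤ j := by
      have h0 : (0:ℤ) ≤ ⌊u/g⌋ := Int.floor_nonneg.2 (by positivity)
      omega
    have hjg1 : u < (j:ℝ) * g := by
      have := Int.lt_floor_add_one (u/g)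
      calc u = (u/g) * g := by field_simp
        _ < ((⌊u/g⌋ : ℝ) + 1) * g := mul_lt_mul_of_pos_right this hg0
        _ = (j:ℝ) * g := by push_cast [hj]; ring
    have hjg2 : (j:ℝ) * g < v := by
      have hfl : (⌊u/g⌋ : ℝ) ≤ u/g := Int.floor_le _
      calc (j:ℝ) * g = ((⌊u/g⌋ : ℝ) + 1) * g := by push_cast [hj]; ring
        _ ≤ (u/g + 1) * g := mul_le_mul_of_nonneg_right (by linarith) hg0.le
        _ = u + g := by field_simp
        _ < v := by linarith
    set m : ℤ := j * p with hm
    have hm1 : 1 ≤ m := by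
      have : 1 ≤ p := by omega
      calc (1:ℤ) = 1 * 1 := by ring
        _ ≤ j * p := by apply mul_le_mul hj1 this (by omega) (by omega)
    refine ⟨m.toNat, by omega, ?_⟩
    have hmc : ((m.toNat : ℕ) : ℝ) = (m:ℝ) := by exact_mod_cast Int.toNat_of_nonneg (by omega)
    rw [hmc]
    have hmal : (m:ℝ) * α = (j:ℝ) * g + (-(j * q) : ℤ) := by
      rw [hm]
      push_cast
      have : (p:ℝ) * α = g - q := by linarith [hpq]
      calc (j:ℝ) * (p:ℝ) * α = (j:ℝ) * ((p:ℝ) * α) := by ring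
        _ = (j:ℝ) * (g - q) := by rw [this]
        _ = (j:ℝ) * g + -((j:ℝ) * (q:ℝ)) := by ring
    have hfr : Int.fract ((m:ℝ) * α) = (j:ℝ) * g := by
      rw [hmal, Int.fract_add_intCast, Int.fract_eq_self.2 ⟨by linarith, by linarith⟩]
    rw [hfr]
    exact ⟨hjg1, hjg2⟩

-- the refined partition machinery
def Pfin (b n : ℕ) : Finset (ℕ × ℕ) := Finset.Icc 1 (b-1) ×ˢ Finset.range n

noncomputable def ptF (b : ℕ) (p : ℕ × ℕ) : ℝ := Int.fract (be b p.1 - p.2 * al b)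

noncomputable def Ffin (b n : ℕ) : Finset ℝ := (Pfin b n).image (ptF b)

noncomputable def Wd (b n : ℕ) (t : ℝ) : Fin n → ℕ :=
  fun i => Dg b (Int.fract (t + i * al b))

lemma be_mem_Ico (hb : 5 ≤ b) {d : ℕ} (hd1 : 1 ≤ d) (hd2 : d ≤ b - 1) :
    0 ≤ be b d ∧ be b d < 1 := by
  constructor
  · exact Real.logb_nonneg (one_lt_B hb) (by exact_mod_cast hd1)
  · have : be b d < Real.logb b b := by
      apply Real.logb_lt_logb (one_lt_B hb) (by exact_mod_cast hd1)
      have : d < b := by omega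
      exact_mod_cast this
    rwa [Real.logb_self_eq_one (one_lt_B hb)] at this

lemma lemA (hb : 5 ≤ b) {n : ℕ} {t t' : ℝ} (ht : 0 ≤ t) (ht' : t' < 1) (htt : t ≤ t')
    (hF : ∀ p ∈ Pfin b n, ptF b p ∉ Set.Ioc t t') : Wd b n t = Wd b n t' := by
  funext i
  set α := al b with hα
  have hin : ((i:ℕ):ℕ) < n := i.2
  set k : ℤ := ⌊t + (i:ℕ) * α⌋ with hk
  set k' : ℤ := ⌊t' + (i:ℕ) * α⌋ with hk'
  have hkk : k = k' := by
    by_contra hne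
    have hle : k ≤ k' := Int.floor_le_floor (by linarith)
    have hlt : k < k' := lt_of_le_of_ne hle hne
    -- then k' - i*α ∈ Ioc t t'
    have h1 : t + (i:ℕ) * α < (k':ℝ) := by
      have : (k:ℝ) + 1 ≤ (k':ℝ) := by exact_mod_cast hlt
      have h2 := Int.lt_floor_add_one (t + (i:ℕ) * α)
      rw [← hk] at h2
      linarith
    have h2 : (k':ℝ) ≤ t' + (i:ℕ) * α := by
      have := Int.floor_le (t' + (i:ℕ) * α)
      rw [← hk'] at this
      exact_mod_cast this
    set x : ℝ := (k':ℝ) - (i:ℕ) * α with hx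
    have hxIoc : x ∈ Set.Ioc t t' := ⟨by linarith, by linarith⟩
    apply hF (1, (i:ℕ)) (by simp [Pfin, hin]; omega)
    have hpt : ptF b (1, (i:ℕ)) = x := by
      rw [ptF, be]
      simp only [Nat.cast_one, Real.logb_one]
      have : (0:ℝ) - (i:ℕ) * α = -((i:ℕ) * α) := by ring
      rw [this, ← Int.fract_intCast_add k' (-((i:ℕ) * α))]
      have hxx : (k':ℝ) + -((i:ℕ) * α) = x := by rw [hx]; ring
      rw [hxx]
      exact Int.fract_eq_self.2 ⟨by linarith, by linarith⟩
    rw [hpt]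
    exact hxIoc
  -- same floor; compare digits
  show Dg b (Int.fract (t + (i:ℕ) * α)) = Dg b (Int.fract (t' + (i:ℕ) * α))
  set u : ℝ := Int.fract (t + (i:ℕ) * α) with hu
  set u' : ℝ := Int.fract (t' + (i:ℕ) * α) with hu'
  have hueq : u = t + (i:ℕ) * α - k := by rw [hu, hk]; exact (Int.self_sub_floor _).symm
  have hueq' : u' = t' + (i:ℕ) * α - k := by
    rw [hu', hkk, hk']
    exact (Int.self_sub_floor _).symm
  have huu : u ≤ u' := by rw [hueq, hueq']; linarith
  by_contra hne
  have hmono : Dg b u ≤ Dg b u' := Dg_mono hb huu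
  have hlt : Dg b u < Dg b u' := lt_of_le_of_ne hmono hne
  set d : ℕ := Dg b u' with hd
  have hu'0 : 0 ≤ u' := Int.fract_nonneg _
  have hu'1 : u' < 1 := Int.fract_lt_one _
  have hd1 : 1 ≤ d := by
    rw [hd]; exact Dg_ge_one hb hu'0
  have hdb : d ≤ b - 1 := by rw [hd]; exact Dg_le hb hu'1
  have h1 : be b d ≤ u' := (be_le_iff hb hd1 u').2 le_rfl
  have h2 : u < be b d := (lt_be_iff hb hd1 u).2 hlt
  set x : ℝ := be b d - (i:ℕ) * α + k with hx
  have hxIoc : x ∈ Set.Ioc t t' := by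
    constructor
    · have : t + (i:ℕ) * α - k < be b d := by rw [← hueq]; exact h2
      rw [hx]; linarith
    · have : be b d ≤ t' + (i:ℕ) * α - k := by rw [← hueq']; exact h1
      rw [hx]; linarith
  apply hF (d, (i:ℕ)) (by simp [Pfin, hin]; omega)
  have hpt : ptF b (d, (i:ℕ)) = x := by
    rw [ptF]
    show Int.fract (be b d - (i:ℕ) * α) = x
    rw [← Int.fract_add_intCast (be b d - (i:ℕ) * α) k]
    have hxx : be b d - (i:ℕ) * α + (k:ℝ) = x := by rw [hx]
    rw [hxx]
    exact Int.fract_eq_self.2 ⟨by linarith [hxIoc.1], by linarith [hxIoc.2]⟩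
  rw [hpt]
  exact hxIoc

lemma lemB (hb : 5 ≤ b) {n : ℕ} (hn : 1 ≤ n) {t t' : ℝ} (ht : 0 ≤ t) (ht1 : t < 1)
    (ht0' : 0 ≤ t') (ht1' : t' < 1) (htt : t ≤ t') (hW : Wd b n t = Wd b n t') :
    ∀ p ∈ Pfin b n, ptF b p ∉ Set.Ioc t t' := by
  set α := al b with hα
  -- from letter 0: t' - t < α
  have hδ : t' - t < α := by
    have h0 := congrFun hW ⟨0, hn⟩
    simp only [Wd] at h0
    norm_num at h0
    rw [Int.fract_eq_self.2 ⟨ht, ht1⟩, Int.fract_eq_self.2 ⟨ht0', ht1'⟩] at h0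
    have := gap_lt hb ht ht1 ht0' ht1' h0
    rw [abs_lt] at this
    linarith [this.1, this.2]
  rintro ⟨d, i⟩ hp hIoc
  simp only [Pfin, Finset.mem_product, Finset.mem_Icc, Finset.mem_range] at hp
  obtain ⟨⟨hd1, hdb⟩, hin⟩ := hp
  have hWi := congrFun hW ⟨i, hin⟩
  simp only [Wd] at hWi
  set u : ℝ := Int.fract (t + (i:ℕ) * α) with hu
  set u' : ℝ := Int.fract (t' + (i:ℕ) * α) with hu'
  set k : ℤ := ⌊t + (i:ℕ) * α⌋ with hk
  set k' : ℤ := ⌊t' + (i:ℕ) * α⌋ with hk'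
  have hle : k ≤ k' := Int.floor_le_floor (by linarith)
  have hk1 : k' ≤ k + 1 := by
    have h1 : t' + (i:ℕ) * α < (t + (i:ℕ) * α) + 1 := by
      have := al_lt_half hb
      linarith
    calc k' ≤ ⌊(t + (i:ℕ) * α) + 1⌋ := Int.floor_le_floor h1.le
      _ = k + 1 := by rw [Int.floor_add_one]
  have hueq : u = t + (i:ℕ) * α - k := (Int.self_sub_floor _).symm
  have hueq' : u' = t' + (i:ℕ) * α - k' := (Int.self_sub_floor _).symm
  have hu0 : 0 ≤ u := Int.fract_nonneg _
  have hu1 : u < 1 := Int.fract_lt_one _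
  have hu0' : 0 ≤ u' := Int.fract_nonneg _
  have hu1' : u' < 1 := Int.fract_lt_one _
  have hgap := gap_lt hb hu0 hu1 hu0' hu1' hWi
  rw [abs_lt] at hgap
  rcases eq_or_lt_of_le hle with heq | hlt
  · -- no wrap
    set ξ : ℝ := ptF b (d, i) with hξ
    have hξeq : ξ = Int.fract (be b d - (i:ℕ) * α) := rfl
    set J : ℤ := ⌊be b d - (i:ℕ) * α⌋ with hJ
    have hξval : ξ = be b d - (i:ℕ) * α - J := (Int.self_sub_floor _).symm
    -- w = ξ + i α - k = be b d - J - k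
    have hbed := be_mem_Ico hb hd1 hdb
    have hwuu : u < be b d - (J:ℝ) - k ∧ be b d - (J:ℝ) - k ≤ u' := by
      constructor
      · rw [hueq]
        have := hIoc.1
        rw [hξval] at this
        linarith
      · rw [hueq', ← heq]
        have := hIoc.2
        rw [hξval] at this
        linarith
    -- the integer J + k must be 0
    have hint : (J:ℝ) + k = 0 := by
      have h1 : be b d - ((J:ℝ) + k) > u := by linarith [hwuu.1]
      have h2 : be b d - ((J:ℝ) + k) ≤ u' := by linarith [hwuu.2]
      have hlow : -1 < (J:ℝ) + k := by linarith [hbed.2, hu0]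
      have hhigh : (J:ℝ) + k < 1 := by linarith [hbed.1, hu1']
      have : J + k = 0 := by
        have hl : (-1:ℝ) < ((J + k : ℤ):ℝ) := by push_cast; linarith
        have hh : ((J + k : ℤ):ℝ) < 1 := by push_cast; linarith
        have hl' : (-1:ℤ) < J + k := by exact_mod_cast hl
        have hh' : J + k < 1 := by exact_mod_cast hh
        omega
      exact_mod_cast congrArg (Int.cast : ℤ → ℝ) this
    have hwu : u < be b d := by linarith [hwuu.1, hint]
    have hwu' : be b d ≤ u' := by linarith [hwuu.2, hint]
    have hA : Dg b u < d := (lt_be_iff hb hd1 u).1 hwu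
    have hB : d ≤ Dg b u' := (be_le_iff hb hd1 u').1 hwu'
    rw [hWi] at hA
    omega
  · -- wrap case: contradiction with gap
    have hk'eq : k' = k + 1 := by omega
    have : u - u' = 1 - (t' - t) := by
      rw [hueq, hueq', hk'eq]
      push_cast
      ring
    have hhalf := al_lt_half hb
    linarith [hgap.2]

lemma block_eq_Wd (hb : 5 ≤ b) {n : ℕ} (m : ℕ) :
    (fun i : Fin n => leadingDigit b ((2:ℝ) ^ (m + (i:ℕ)))) =
      Wd b n (Int.fract ((m:ℝ) * al b)) := by
  funext i
  rw [leadingDigit_eq hb (m + (i:ℕ)), Wd]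
  congr 1
  have h1 : Int.fract ((m:ℝ) * al b) + (i:ℕ) * al b
      = ((m + (i:ℕ) : ℕ):ℝ) * al b - (⌊(m:ℝ) * al b⌋ : ℤ) := by
    rw [← Int.self_sub_floor]
    push_cast
    ring
  rw [h1, Int.fract_sub_intCast]

lemma zero_mem_Ffin (hb : 5 ≤ b) {n : ℕ} (hn : 1 ≤ n) : (0:ℝ) ∈ Ffin b n := by
  rw [Ffin, Finset.mem_image]
  refine ⟨(1, 0), by simp [Pfin]; omega, ?_⟩
  rw [ptF, be]
  norm_num

lemma Ffin_mem_Ico {n : ℕ} {ξ : ℝ} (hξ : ξ ∈ Ffin b n) : 0 ≤ ξ ∧ ξ < 1 := by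
  rw [Ffin, Finset.mem_image] at hξ
  obtain ⟨p, _, rfl⟩ := hξ
  exact ⟨Int.fract_nonneg _, Int.fract_lt_one _⟩

lemma blockComplexity_eq_card (hb : 5 ≤ b) (hsf : Squarefree b) {n : ℕ} (hn : 1 ≤ n) :
    blockComplexity 2 b n = (Ffin b n).card := by
  have hSet : {w : Fin n → ℕ |
      ∃ m : ℕ, 1 ≤ m ∧ ∀ i : Fin n, w i = leadingDigit b ((2:ℝ) ^ (m + (i : ℕ)))}
      = Wd b n '' ((Ffin b n : Finset ℝ) : Set ℝ) := by
    ext w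
    constructor
    · rintro ⟨m, hm, hw⟩
      have hw' : w = Wd b n (Int.fract ((m:ℝ) * al b)) := by
        rw [← block_eq_Wd hb m]
        funext i
        exact hw i
      set t₀ : ℝ := Int.fract ((m:ℝ) * al b) with ht₀
      have ht₀0 : 0 ≤ t₀ := Int.fract_nonneg _
      have ht₀1 : t₀ < 1 := Int.fract_lt_one _
      set T := (Ffin b n).filter (· ≤ t₀) with hT
      have hTne : T.Nonempty := ⟨0, by
        rw [hT, Finset.mem_filter]
        exact ⟨zero_mem_Ffin hb hn, ht₀0⟩⟩
      set ξ := T.max' hTne with hξ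
      have hξT : ξ ∈ T := T.max'_mem hTne
      rw [hT, Finset.mem_filter] at hξT
      obtain ⟨hξF, hξle⟩ := hξT
      have hξ0 : 0 ≤ ξ := (Ffin_mem_Ico hξF).1
      have hgap : ∀ p ∈ Pfin b n, ptF b p ∉ Set.Ioc ξ t₀ := by
        rintro p hp ⟨h1, h2⟩
        have hmem : ptF b p ∈ T := by
          rw [hT, Finset.mem_filter]
          exact ⟨Finset.mem_image_of_mem _ hp, h2⟩
        have := T.le_max' _ hmem
        rw [← hξ] at this
        linarith
      have := lemA hb hξ0 ht₀1 hξle hgap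
      exact ⟨ξ, hξF, by rw [← this] at hw'; exact hw'.symm⟩
    · rintro ⟨ξ, hξF, rfl⟩
      have hξF' : ξ ∈ Ffin b n := hξF
      have hξ0 : 0 ≤ ξ := (Ffin_mem_Ico hξF').1
      have hξ1 : ξ < 1 := (Ffin_mem_Ico hξF').2
      set Tgt := (Ffin b n).filter (fun x => ξ < x) with hTgt
      set η : ℝ := if h : Tgt.Nonempty then Tgt.min' h else 1 with hη
      have hξη : ξ < η := by
        rw [hη]
        split_ifs with h
        · exact (Finset.mem_filter.1 (Tgt.min'_mem h)).2
        · exact hξ1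
      have hη1 : η ≤ 1 := by
        rw [hη]
        split_ifs with h
        · exact ((Ffin_mem_Ico (Finset.mem_filter.1 (Tgt.min'_mem h)).1).2).le
        · exact le_refl 1
      obtain ⟨m, hm1, hmlt, hmlt2⟩ := density hb hsf hξ0 hξη hη1
      set t₀ : ℝ := Int.fract ((m:ℝ) * al b) with ht₀
      have ht₀1 : t₀ < 1 := Int.fract_lt_one _
      have hgap : ∀ p ∈ Pfin b n, ptF b p ∉ Set.Ioc ξ t₀ := by
        rintro p hp ⟨h1, h2⟩
        have hmemT : ptF b p ∈ Tgt := by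
          rw [hTgt, Finset.mem_filter]
          exact ⟨Finset.mem_image_of_mem _ hp, h1⟩
        have hTne : Tgt.Nonempty := ⟨_, hmemT⟩
        have hmin : η ≤ ptF b p := by
          rw [hη, dif_pos hTne]
          exact Tgt.min'_le _ hmemT
        linarith
      have hWeq := lemA hb hξ0 ht₀1 hmlt.le hgap
      refine ⟨m, hm1, ?_⟩
      intro i
      rw [hWeq]
      exact (congrFun (block_eq_Wd hb (n := n) m) i).symm
  show Set.ncard {w : Fin n → ℕ |
      ∃ m : ℕ, 1 ≤ m ∧ ∀ i : Fin n, w i = leadingDigit b ((2:ℝ) ^ (m + (i : ℕ)))}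
      = (Ffin b n).card
  rw [hSet, Set.ncard_image_of_injOn, Set.ncard_coe_finset]
  intro x hx y hy hW
  by_contra hne
  rcases lt_or_gt_of_ne hne with hlt | hlt
  · obtain ⟨p, hp, hpt⟩ := Finset.mem_image.1 (show y ∈ Ffin b n from hy)
    exact lemB hb hn (Ffin_mem_Ico (show x ∈ Ffin b n from hx)).1
      (Ffin_mem_Ico (show x ∈ Ffin b n from hx)).2
      (Ffin_mem_Ico (show y ∈ Ffin b n from hy)).1
      (Ffin_mem_Ico (show y ∈ Ffin b n from hy)).2 hlt.le hW p hp
      (by rw [hpt]; exact ⟨hlt, le_refl _⟩)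
  · obtain ⟨p, hp, hpt⟩ := Finset.mem_image.1 (show x ∈ Ffin b n from hx)
    exact lemB hb hn (Ffin_mem_Ico (show y ∈ Ffin b n from hy)).1
      (Ffin_mem_Ico (show y ∈ Ffin b n from hy)).2
      (Ffin_mem_Ico (show x ∈ Ffin b n from hx)).1
      (Ffin_mem_Ico (show x ∈ Ffin b n from hx)).2 hlt.le hW.symm p hp
      (by rw [hpt]; exact ⟨hlt, le_refl _⟩)

lemma logb_mulpow (hb : 5 ≤ b) {d j : ℕ} (hd : 1 ≤ d) :
    Real.logb b ((d:ℝ) * 2^j) = be b d + j * al b := by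
  rw [Real.logb_mul (by positivity) (by positivity), be, al, Real.logb_pow]

lemma ptF_eq_of_rel (hb : 5 ≤ b) {d e i j k : ℕ} (hd : 1 ≤ d) (he : 1 ≤ e)
    (h : d * 2^j = e * 2^i * b^k) : ptF b (d,i) = ptF b (e,j) := by
  have hcast : (d:ℝ) * 2^j = (e:ℝ) * 2^i * (b:ℝ)^k := by exact_mod_cast h
  have hlog := congrArg (Real.logb b) hcast
  rw [logb_mulpow hb hd, Real.logb_mul (by positivity) (by positivity),
    logb_mulpow hb he, Real.logb_pow, Real.logb_self_eq_one (one_lt_B hb)] at hlog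
  rw [ptF, ptF]
  apply Int.fract_eq_fract.2
  refine ⟨(k:ℤ), ?_⟩
  push_cast
  linarith [hlog]

lemma rel_of_ptF_eq (hb : 5 ≤ b) {d e i j : ℕ} (hd : 1 ≤ d) (he : 1 ≤ e)
    (h : ptF b (d,i) = ptF b (e,j)) :
    ∃ k : ℕ, d * 2^j = e * 2^i * b^k ∨ d * 2^j * b^k = e * 2^i := by
  rw [ptF, ptF] at h
  obtain ⟨z, hz⟩ := Int.fract_eq_fract.1 h
  have hY0 : ((e:ℝ) * 2^i) ≠ 0 := by positivity
  have hdiff : Real.logb b (((d:ℝ) * 2^j) / ((e:ℝ) * 2^i)) = (z:ℝ) := by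
    rw [Real.logb_div (by positivity) hY0, logb_mulpow hb hd, logb_mulpow hb he]
    simp only at hz
    linarith [hz]
  have hXY : ((d:ℝ) * 2^j) / ((e:ℝ) * 2^i) = (b:ℝ) ^ (z:ℝ) := by
    rw [← hdiff, Real.rpow_logb (B_pos hb) (B_ne_one hb) (by positivity)]
  rw [div_eq_iff hY0] at hXY
  rcases le_or_gt 0 z with hz0 | hz0
  · refine ⟨z.toNat, Or.inl ?_⟩
    have hbz : (b:ℝ) ^ (z:ℝ) = ((b ^ z.toNat : ℕ):ℝ) := by
      push_cast
      rw [← Real.rpow_natCast (b:ℝ) z.toNat]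
      congr 1
      exact_mod_cast (Int.toNat_of_nonneg hz0).symm
    rw [hbz] at hXY
    have : (d:ℝ) * 2^j = ((e * 2^i * b^z.toNat : ℕ):ℝ) := by
      push_cast at hXY ⊢
      linarith [hXY]
    exact_mod_cast this
  · refine ⟨(-z).toNat, Or.inr ?_⟩
    have hone : (b:ℝ) ^ (z:ℝ) * (b:ℝ) ^ (((-z).toNat:ℕ):ℝ) = 1 := by
      rw [← Real.rpow_add (B_pos hb)]
      have : (z:ℝ) + (((-z).toNat:ℕ):ℝ) = 0 := by
        have : (((-z).toNat:ℕ):ℤ) = -z := Int.toNat_of_nonneg (by omega)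
        have h2 : (((-z).toNat:ℕ):ℝ) = -(z:ℝ) := by exact_mod_cast this
        rw [h2]; ring
      rw [this, Real.rpow_zero]
    have hfinal : (d:ℝ) * 2^j * (b:ℝ)^(((-z).toNat:ℕ):ℝ) = (e:ℝ) * 2^i := by
      calc (d:ℝ) * 2^j * (b:ℝ)^(((-z).toNat:ℕ):ℝ)
          = (e:ℝ) * 2^i * ((b:ℝ)^(z:ℝ) * (b:ℝ)^(((-z).toNat:ℕ):ℝ)) := by rw [hXY]; ring
        _ = (e:ℝ) * 2^i := by rw [hone, mul_one]
    rw [Real.rpow_natCast] at hfinal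
    have : (d:ℝ) * 2^j * ((b ^ (-z).toNat : ℕ):ℝ) = (e:ℝ) * 2^i := by
      push_cast
      exact hfinal
    exact_mod_cast this

def Dodd (b : ℕ) : Finset ℕ :=
  (Finset.Icc 1 (b-1)).filter (fun d => ¬ 2 ∣ d ∧ (¬ 2 ∣ b ∨ d ≠ 1))

def Rfin (b n : ℕ) : Finset (ℕ × ℕ) :=
  ((Finset.Icc 1 (b-1)) ×ˢ {0}) ∪ (Dodd b ×ˢ (Finset.Ico 1 n))

lemma mem_Rfin_iff {n d i : ℕ} (hn : 1 ≤ n) : (d,i) ∈ Rfin b n ↔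
    (1 ≤ d ∧ d ≤ b-1 ∧ i < n) ∧
      (1 ≤ i → (¬ 2 ∣ d ∧ (¬ 2 ∣ b ∨ d ≠ 1))) := by
  simp only [Rfin, Finset.mem_union, Finset.mem_product, Dodd,
    Finset.mem_filter, Finset.mem_Icc, Finset.mem_Ico, Finset.mem_singleton]
  constructor
  · rintro (⟨⟨h1, h2⟩, h3⟩ | ⟨⟨⟨h1, h2⟩, h4, h5⟩, h6, h7⟩) <;>
      refine ⟨⟨by omega, by omega, by omega⟩, fun hi => ?_⟩
    · omega
    · exact ⟨h4, h5⟩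
  · rintro ⟨⟨h1, h2, h3⟩, h5⟩
    rcases Nat.eq_zero_or_pos i with hi | hi
    · left; exact ⟨⟨h1, h2⟩, hi⟩
    · right
      obtain ⟨ha, hb'⟩ := h5 hi
      exact ⟨⟨⟨h1, h2⟩, ha, hb'⟩, hi, h3⟩

lemma Rfin_subset_Pfin {n : ℕ} (hn : 1 ≤ n) : Rfin b n ⊆ Pfin b n := by
  rintro ⟨d, i⟩ hp
  rw [mem_Rfin_iff hn] at hp
  rw [Pfin, Finset.mem_product, Finset.mem_Icc, Finset.mem_range]
  omega

lemma reach (hb : 5 ≤ b) {n : ℕ} (hn : 1 ≤ n) :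
    ∀ i d : ℕ, 1 ≤ d → d ≤ b - 1 → i < n →
      ptF b (d,i) ∈ (Rfin b n).image (ptF b) := by
  intro i
  induction i with
  | zero =>
    intro d hd1 hd2 _
    exact Finset.mem_image_of_mem _ ((mem_Rfin_iff hn).2 ⟨⟨hd1, hd2, by omega⟩, by omega⟩)
  | succ i ih =>
    intro d hd1 hd2 hin
    by_cases h2d : 2 ∣ d
    · have heq : ptF b (d, i+1) = ptF b (d/2, i) := by
        apply ptF_eq_of_rel hb hd1 (by omega)
        rw [pow_zero, mul_one, pow_succ]
        have hd : d = d/2 * 2 := by omega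
        calc d * 2^i = (d/2 * 2) * 2^i := by rw [← hd]
          _ = d/2 * (2^i * 2) := by ring
      rw [heq]
      exact ih (d/2) (by omega) (by omega) (by omega)
    · by_cases hcase : 2 ∣ b ∧ d = 1
      · obtain ⟨hbe, rfl⟩ := hcase
        have heq : ptF b (1, i+1) = ptF b (b/2, i) := by
          refine (ptF_eq_of_rel hb (b := b) (d := b/2) (e := 1) (i := i) (j := i+1)
            (k := 1) (by omega) (by omega) ?_).symm
          rw [pow_one, one_mul]
          have hbb : b = 2 * (b/2) := by omega
          calc b/2 * 2^(i+1) = b/2 * (2^i * 2) := by rw [pow_succ]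
            _ = 2^i * (2 * (b/2)) := by ring
            _ = 2^i * b := by rw [← hbb]
        rw [heq]
        exact ih (b/2) (by omega) (by omega) (by omega)
      · apply Finset.mem_image_of_mem
        rw [mem_Rfin_iff hn]
        refine ⟨⟨hd1, hd2, hin⟩, fun _ => ⟨h2d, ?_⟩⟩
        by_cases hbb : 2 ∣ b
        · right; intro hd; exact hcase ⟨hbb, hd⟩
        · left; exact hbb

lemma inj_aux (hb : 5 ≤ b) (hsf : Squarefree b) {n d e i j k : ℕ} (hn : 1 ≤ n)
    (hdi : (d,i) ∈ Rfin b n) (hej : (e,j) ∈ Rfin b n)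
    (heq : d * 2^j = e * 2^i * b^k) : (d,i) = (e,j) := by
  rw [mem_Rfin_iff hn] at hdi hej
  obtain ⟨⟨hd1, hd2, hin⟩, hdodd⟩ := hdi
  obtain ⟨⟨he1, he2, hjn⟩, heodd⟩ := hej
  have hk0 : k = 0 := by
    by_contra hk
    have hk1 : 1 ≤ k := by omega
    rcases sf_cases hsf with hodd | ⟨hbe, hco⟩
    · -- b odd
      have hbd : b ∣ d * 2^j := by
        rw [heq]
        exact Dvd.dvd.mul_left (dvd_pow_self b (by omega)) _
      have hcop : Nat.Coprime b (2^j) := by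
        apply Nat.Coprime.pow_right
        rw [Nat.coprime_two_right, Nat.odd_iff]
        omega
      have h1 := hcop.dvd_of_dvd_mul_right hbd
      have := Nat.le_of_dvd (by omega) h1
      omega
    · -- b = 2c, c odd
      set c := b / 2 with hc
      have hc3 : 3 ≤ c := by omega
      have hcd : c ∣ d := by
        have h1 : c ∣ d * 2^j := by
          rw [heq]
          apply Dvd.dvd.mul_left _ (e * 2^i)
          exact dvd_trans ⟨2, by omega⟩ (dvd_pow_self b (by omega))
        have hcop : Nat.Coprime c (2^j) := by
          apply Nat.Coprime.pow_right
          rw [Nat.coprime_two_right, Nat.odd_iff]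
          omega
        exact hcop.dvd_of_dvd_mul_right h1
      have hdc : d = c := by
        obtain ⟨t, ht⟩ := hcd
        have ht0 : t ≠ 0 := by rintro rfl; omega
        have ht2 : ¬ 2 ≤ t := by
          intro h
          have := Nat.mul_le_mul_left c h
          omega
        have ht1 : t = 1 := by omega
        rw [ht1, mul_one] at ht
        omega
      obtain ⟨k', rfl⟩ : ∃ k', k = k' + 1 := ⟨k - 1, by omega⟩
      rw [hdc] at heq
      have hb2c : b = 2 * c := by omega
      rw [hb2c, mul_pow] at heq
      -- heq : c * 2^j = e * 2^i * (2^(k'+1) * c^(k'+1))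
      have heq2 : 2^j = e * 2^i * 2^(k'+1) * c^k' := by
        apply Nat.eq_of_mul_eq_mul_right (show 0 < c by omega)
        calc 2^j * c = c * 2^j := by ring
          _ = e * 2^i * (2^(k'+1) * c^(k'+1)) := heq
          _ = e * 2^i * 2^(k'+1) * c^k' * c := by rw [pow_succ]; ring
      have hk'0 : k' = 0 := by
        by_contra hk'
        have hcdvd : c ∣ 2^j := by
          rw [heq2]
          apply Dvd.dvd.mul_left _ (e * 2^i * 2^(k'+1))
          exact dvd_pow_self c (by omega)
        have hcop : Nat.Coprime c (2^j) := by
          apply Nat.Coprime.pow_right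
          rw [Nat.coprime_two_right, Nat.odd_iff]
          omega
        have := hcop.eq_one_of_dvd hcdvd
        omega
      rw [hk'0] at heq2
      -- heq2 : 2^j = e * 2^i * 2^1
      have hj1 : 1 ≤ j := by
        rcases Nat.eq_zero_or_pos j with rfl | h
        · exfalso
          have h2 : (1:ℕ) = e * 2^i * 2 := by
            have h' := heq2
            norm_num at h'
            exact h'
          have h3 : 1 ≤ e * 2^i := Nat.one_le_iff_ne_zero.2 (by positivity)
          omega
        · exact h
      obtain ⟨hoe, hor⟩ := heodd hj1
      have he'1 : e ≠ 1 := by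
        rcases hor with h | h
        · exact absurd (by omega : 2 ∣ b) h
        · exact h
      have hedvd : e ∣ 2^j := ⟨2^i * 2^(0+1), by rw [heq2]; ring⟩
      have hcop : Nat.Coprime e (2^j) := by
        apply Nat.Coprime.pow_right
        rw [Nat.coprime_two_right, Nat.odd_iff]
        omega
      exact he'1 (hcop.eq_one_of_dvd hedvd)
  subst hk0
  rw [pow_zero, mul_one] at heq
  rcases Nat.lt_trichotomy i j with hij | hij | hij
  · -- i < j : e even, contradiction
    exfalso
    have hj1 : 1 ≤ j := by omega
    obtain ⟨hoe, -⟩ := heodd hj1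
    apply hoe
    have h2 : 2^j = 2^(j-i) * 2^i := by
      rw [← pow_add]
      congr 1
      omega
    have he' : e = d * 2^(j-i) := by
      apply Nat.eq_of_mul_eq_mul_right (show 0 < 2^i by positivity)
      rw [← heq, h2]
      ring
    rw [he']
    exact Dvd.dvd.mul_left (dvd_pow_self 2 (by omega)) d
  · subst hij
    have : d = e := Nat.eq_of_mul_eq_mul_right (by positivity) heq
    rw [this]
  · exfalso
    have hi1 : 1 ≤ i := by omega
    obtain ⟨hod, -⟩ := hdodd hi1
    apply hod
    have h2 : 2^i = 2^(i-j) * 2^j := by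
      rw [← pow_add]
      congr 1
      omega
    have hd' : d = e * 2^(i-j) := by
      apply Nat.eq_of_mul_eq_mul_right (show 0 < 2^j by positivity)
      rw [heq, h2]
      ring
    rw [hd']
    exact Dvd.dvd.mul_left (dvd_pow_self 2 (by omega)) e

lemma image_Rfin_eq (hb : 5 ≤ b) {n : ℕ} (hn : 1 ≤ n) :
    (Rfin b n).image (ptF b) = Ffin b n := by
  apply Finset.Subset.antisymm
  · exact Finset.image_subset_image (Rfin_subset_Pfin hn)
  · intro x hx
    rw [Ffin, Finset.mem_image] at hx
    obtain ⟨⟨d, i⟩, hp, rfl⟩ := hx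
    rw [Pfin, Finset.mem_product, Finset.mem_Icc, Finset.mem_range] at hp
    exact reach hb hn i d hp.1.1 hp.1.2 hp.2

lemma inj_on_Rfin (hb : 5 ≤ b) (hsf : Squarefree b) {n : ℕ} (hn : 1 ≤ n) :
    Set.InjOn (ptF b) ((Rfin b n : Finset (ℕ × ℕ)) : Set (ℕ × ℕ)) := by
  rintro ⟨d,i⟩ hdi ⟨e,j⟩ hej h
  have hdi' : (d,i) ∈ Rfin b n := hdi
  have hej' : (e,j) ∈ Rfin b n := hej
  have hd1 : 1 ≤ d := ((mem_Rfin_iff hn).1 hdi').1.1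
  have he1 : 1 ≤ e := ((mem_Rfin_iff hn).1 hej').1.1
  obtain ⟨k, hrel | hrel⟩ := rel_of_ptF_eq hb hd1 he1 h
  · exact inj_aux hb hsf hn hdi' hej' hrel
  · exact (inj_aux hb hsf hn hej' hdi' hrel.symm).symm

lemma Dodd_card (hb : 5 ≤ b) : (Dodd b).card = (b-1)/2 := by
  have himg : Dodd b
      = (Finset.range ((b-1)/2)).image (fun k => 2*k + (if 2 ∣ b then 3 else 1)) := by
    ext d
    simp only [Dodd, Finset.mem_filter, Finset.mem_Icc, Finset.mem_image, Finset.mem_range]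
    by_cases hbe : 2 ∣ b
    · simp only [if_pos hbe]
      constructor
      · rintro ⟨⟨h1, h2⟩, h3, h4⟩
        have hd1 : d ≠ 1 := by
          rcases h4 with h | h
          · exact absurd hbe h
          · exact h
        exact ⟨(d-3)/2, by omega, by omega⟩
      · rintro ⟨k, hk, rfl⟩
        exact ⟨⟨by omega, by omega⟩, by omega, Or.inr (by omega)⟩
    · simp only [if_neg hbe]
      constructor
      · rintro ⟨⟨h1, h2⟩, h3, h4⟩
        exact ⟨(d-1)/2, by omega, by omega⟩
      · rintro ⟨k, hk, rfl⟩
        exact ⟨⟨by omega, by omega⟩, by omega, Or.inl hbe⟩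
  have hinj : Function.Injective (fun k => 2*k + (if 2 ∣ b then 3 else 1)) := by
    intro x y hxy
    simp only at hxy
    omega
  rw [himg, Finset.card_image_of_injective _ hinj, Finset.card_range]

lemma Rfin_card (hb : 5 ≤ b) {n : ℕ} (hn : 1 ≤ n) :
    (Rfin b n).card = (b-1) + (b-1)/2 * (n-1) := by
  rw [Rfin, Finset.card_union_of_disjoint]
  · rw [Finset.card_product, Finset.card_product, Nat.card_Icc,
      Finset.card_singleton, Dodd_card hb, Nat.card_Ico]
    omega
  · rw [Finset.disjoint_left]
    rintro ⟨d,i⟩ h1 h2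
    rw [Finset.mem_product, Finset.mem_singleton] at h1
    rw [Finset.mem_product, Finset.mem_Ico] at h2
    omega

lemma Ffin_card (hb : 5 ≤ b) (hsf : Squarefree b) {n : ℕ} (hn : 1 ≤ n) :
    (Ffin b n).card = (b-1)/2 * n + ((b-1)+1)/2 := by
  rw [← image_Rfin_eq hb hn, Finset.card_image_of_injOn (inj_on_Rfin hb hsf hn),
    Rfin_card hb hn]
  obtain ⟨n', rfl⟩ : ∃ n', n = n' + 1 := ⟨n-1, by omega⟩
  have h1 : n' + 1 - 1 = n' := by omega
  rw [h1, Nat.mul_succ]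
  omega

end BC

/-- For squarefree `b ≥ 5`, the block complexity of the leading digit
sequence of `2^n` in base `b` is `p_{2,b}(n) = ⌊(b-1)/2⌋·n + ⌈(b-1)/2⌉`. -/
theorem blockComplexity_two (b : ℕ) (hb : 5 ≤ b) (hsf : Squarefree b) :
    ∀ n : ℕ, 1 ≤ n →
      blockComplexity (2 : ℝ) b n = (b - 1) / 2 * n + ((b - 1) + 1) / 2 := by
  intro n hn
  rw [BC.blockComplexity_eq_card hb hsf hn, BC.Ffin_card hb hsf hn]
end

section
/- Let b ≥ 5 be squarefree and a a positive rational that is not an integral power of b. Then b/a is also a positive rational that is not an integral power of b, and the leading digit sequences of a^n and (b/a)^n in base b have identical block complexity functions: p_{a,b}(n) = p_{b/a,b}(n) for all n ≥ 1. -/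
open Real

namespace BCAux

/-- digit as a function of the fractional part of the base-b log -/
noncomputable def D (b : ℕ) (t : ℝ) : ℕ := (⌊(b : ℝ) ^ t⌋).toNat

lemma exists_delta {b : ℕ} (hb : 1 < b) {u : ℝ} (hu0 : 0 ≤ u) (hu1 : u < 1) :
    ∃ δ > 0, ∀ h : ℝ, 0 ≤ h → h < δ → u + h < 1 ∧ D b (u + h) = D b u := by
  have hb1 : (1 : ℝ) < b := by exact_mod_cast hb
  have hb0 : (0 : ℝ) < b := by linarith
  have h1 : (1 : ℝ) ≤ (b : ℝ) ^ u := by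
    have := Real.rpow_le_rpow_left_iff (x := b) (y := 0) (z := u) hb1
    simpa using this.mpr hu0
  set c : ℤ := ⌊(b : ℝ) ^ u⌋ with hc
  have hc1 : (1 : ℤ) ≤ c := Int.le_floor.mpr (by simpa using h1)
  have hclt : (b : ℝ) ^ u < (c : ℝ) + 1 := Int.lt_floor_add_one _
  have hcpos : (0 : ℝ) < (c : ℝ) + 1 := by
    have : (0:ℝ) < (c:ℝ) := by exact_mod_cast hc1.trans_lt' zero_lt_one
    linarith
  have hu_lt : u < Real.logb b ((c : ℝ) + 1) := by
    rw [Real.lt_logb_iff_rpow_lt hb1 hcpos]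
    exact hclt
  refine ⟨min (1 - u) (Real.logb b ((c : ℝ) + 1) - u), by
    apply lt_min <;> linarith, ?_⟩
  intro h h0 hδ
  have hδ1 := lt_of_lt_of_le hδ (min_le_left _ _)
  have hδ2 := lt_of_lt_of_le hδ (min_le_right _ _)
  have hlt1 : u + h < 1 := by linarith
  refine ⟨hlt1, ?_⟩
  unfold D
  congr 1
  have hge : (c : ℝ) ≤ (b : ℝ) ^ (u + h) := by
    calc (c : ℝ) ≤ (b : ℝ) ^ u := Int.floor_le _
    _ ≤ (b : ℝ) ^ (u + h) := by
        apply Real.rpow_le_rpow_left_iff (x := b) hb1 |>.mpr; linarith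
  have hlt : (b : ℝ) ^ (u + h) < (c : ℝ) + 1 := by
    rw [← Real.rpow_logb hb0 (ne_of_gt hb1) hcpos]
    apply Real.rpow_lt_rpow_left_iff (x := b) hb1 |>.mpr
    linarith
  have := (Int.floor_eq_iff (R := ℝ) (z := c)).mpr ⟨hge, hlt⟩
  rw [this, hc]

end BCAux

namespace BCAux

/-- the length-`n` digit block read off from position `t` on the circle -/
noncomputable def Fblk (b : ℕ) (θ : ℝ) (n : ℕ) (t : ℝ) : Fin n → ℕ :=
  fun i => D b (Int.fract (t + (i : ℕ) * θ))

lemma Fblk_fract (b : ℕ) (θ : ℝ) (n : ℕ) (t : ℝ) :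
    Fblk b θ n (Int.fract t) = Fblk b θ n t := by
  funext i
  unfold Fblk
  congr 1
  have : Int.fract t + (i : ℕ) * θ = (t + (i : ℕ) * θ) - (⌊t⌋ : ℤ) := by
    rw [Int.fract]; ring
  rw [this, Int.fract_sub_intCast]

lemma Fblk_const {b : ℕ} (hb : 1 < b) (θ : ℝ) (n : ℕ) (t : ℝ) :
    ∃ δ > 0, ∀ s, t ≤ s → s < t + δ → Fblk b θ n s = Fblk b θ n t := by
  have H : ∀ i : Fin n, ∃ δ > 0, ∀ h : ℝ, 0 ≤ h → h < δ →
      Int.fract (t + (i : ℕ) * θ) + h < 1 ∧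
      D b (Int.fract (t + (i : ℕ) * θ) + h) = D b (Int.fract (t + (i : ℕ) * θ)) := by
    intro i
    exact exists_delta hb (Int.fract_nonneg _) (Int.fract_lt_one _)
  choose δ hδpos hδ using H
  obtain ⟨Δ, hΔpos, hΔle⟩ : ∃ Δ > 0, ∀ i, Δ ≤ δ i := by
    rcases Nat.eq_zero_or_pos n with h0 | hn
    · subst h0; exact ⟨1, one_pos, fun i => i.elim0⟩
    · have hne : (Finset.univ : Finset (Fin n)).Nonempty := ⟨⟨0, hn⟩, Finset.mem_univ _⟩
      exact ⟨Finset.univ.inf' hne δ, (Finset.lt_inf'_iff hne).mpr fun i _ => hδpos i,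
        fun i => Finset.inf'_le δ (Finset.mem_univ i)⟩
  refine ⟨Δ, hΔpos, fun s hts hlt => ?_⟩
  funext i
  set h := s - t with hh
  have h0 : 0 ≤ h := by linarith
  have hlt' : h < δ i := lt_of_lt_of_le (by linarith) (hΔle i)
  obtain ⟨hfr1, hfr2⟩ := hδ i h h0 hlt'
  unfold Fblk
  have key : Int.fract (s + (i : ℕ) * θ) = Int.fract (t + (i : ℕ) * θ) + h := by
    have e : s + (i : ℕ) * θ = (Int.fract (t + (i : ℕ) * θ) + h) + (⌊t + (i : ℕ) * θ⌋ : ℤ) := by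
      rw [Int.fract]; ring
    rw [e, Int.fract_add_intCast, Int.fract_eq_self.mpr ⟨by have := Int.fract_nonneg (t + (i : ℕ) * θ); linarith, hfr1⟩]
  rw [key, hfr2]

end BCAux

namespace BCAux

lemma exists_small {θ : ℝ} (hθ : Irrational θ) {ε : ℝ} (hε : 0 < ε) :
    ∃ m : ℕ, 1 ≤ m ∧ (Int.fract (m * θ) ∈ Set.Ioo 0 ε ∨ Int.fract (m * θ) ∈ Set.Ioo (1 - ε) 1) := by
  set ε' := min ε 1 with hε'
  have hε'0 : 0 < ε' := lt_min hε one_pos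
  have hε'1 : ε' ≤ 1 := min_le_right _ _
  -- the subgroup ℤ + ℤθ
  let T : AddSubgroup ℝ :=
  { carrier := {x | ∃ k m : ℤ, x = k + m * θ}
    zero_mem' := ⟨0, 0, by simp⟩
    add_mem' := by
      rintro x y ⟨k1, m1, rfl⟩ ⟨k2, m2, rfl⟩
      exact ⟨k1 + k2, m1 + m2, by push_cast; ring⟩
    neg_mem' := by
      rintro x ⟨k, m, rfl⟩
      exact ⟨-k, -m, by push_cast; ring⟩ }
  rcases T.dense_or_cyclic with hd | ⟨g, hg⟩
  · obtain ⟨x, hxT, hx⟩ := hd.exists_mem_open isOpen_Ioo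
      (Set.nonempty_Ioo.mpr hε'0 : (Set.Ioo (0:ℝ) ε').Nonempty)
    obtain ⟨k, m, rfl⟩ := hxT
    obtain ⟨hx0, hxε⟩ := hx
    have hm : m ≠ 0 := by
      rintro rfl
      have h1 : (0:ℝ) < (k:ℝ) := by simpa using hx0
      have h2 : (k:ℝ) < 1 := by
        simp only [Int.cast_zero, zero_mul, add_zero] at hxε; linarith [hxε.trans_le hε'1]
      have : (0:ℤ) < k := by exact_mod_cast h1
      have : (1:ℤ) ≤ k := this
      have : (1:ℝ) ≤ (k:ℝ) := by exact_mod_cast this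
      linarith
    set x := (k:ℝ) + m * θ with hxdef
    have hx1 : x < 1 := lt_of_lt_of_le hxε hε'1
    have hxε2 : x < ε := lt_of_lt_of_le hxε (min_le_left _ _)
    rcases hm.lt_or_gt with hneg | hpos
    · -- m < 0 : use (-m) and get fract = 1 - x
      refine ⟨(-m).toNat, ?_, Or.inr ?_⟩
      · have : (1:ℤ) ≤ -m := by omega
        omega
      · have hcast : (((-m).toNat : ℕ) : ℝ) = ((-m : ℤ) : ℝ) := by
          have h' := Int.toNat_of_nonneg (by omega : (0:ℤ) ≤ -m)
          exact_mod_cast congrArg (fun z : ℤ => (z : ℝ)) h'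
        have heq : ((-m).toNat : ℝ) * θ = -x + ((k : ℤ) : ℝ) := by rw [hcast]; push_cast; ring
        rw [heq, Int.fract_add_intCast]
        have hfx : Int.fract x = x := Int.fract_eq_self.mpr ⟨le_of_lt hx0, hx1⟩
        have hne : Int.fract x ≠ 0 := by rw [hfx]; exact ne_of_gt hx0
        rw [Int.fract_neg hne, hfx]
        constructor <;> [linarith; linarith]
    · refine ⟨m.toNat, ?_, Or.inl ?_⟩
      · omega
      · have hcast : ((m.toNat : ℕ) : ℝ) = ((m : ℤ) : ℝ) := by
          have h' := Int.toNat_of_nonneg (by omega : (0:ℤ) ≤ m)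
          exact_mod_cast congrArg (fun z : ℤ => (z : ℝ)) h'
        have heq : (m.toNat : ℝ) * θ = x + ((-k : ℤ) : ℝ) := by rw [hcast]; push_cast; ring
        rw [heq, Int.fract_add_intCast, Int.fract_eq_self.mpr ⟨le_of_lt hx0, hx1⟩]
        exact ⟨hx0, hxε2⟩
  · -- cyclic case: contradiction with irrationality
    exfalso
    have h1 : (1:ℝ) ∈ T := ⟨1, 0, by simp⟩
    have h2 : θ ∈ T := ⟨0, 1, by simp⟩
    rw [hg] at h1 h2
    obtain ⟨p, hp⟩ := AddSubgroup.mem_closure_singleton.mp h1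
    obtain ⟨q, hq⟩ := AddSubgroup.mem_closure_singleton.mp h2
    have hp0 : p ≠ 0 := by rintro rfl; simp at hp
    have hmain : θ * p = q := by
      rw [zsmul_eq_mul] at hp hq
      calc θ * (p : ℝ) = ((q : ℝ) * g) * p := by rw [hq]
        _ = (q : ℝ) * ((p : ℝ) * g) := by ring
        _ = q := by rw [hp, mul_one]
    apply hθ
    refine ⟨(q : ℚ) / (p : ℚ), ?_⟩
    have hpR : (p : ℝ) ≠ 0 := Int.cast_ne_zero.mpr hp0
    push_cast
    field_simp
    linarith [hmain]
end BCAux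

namespace BCAux

lemma fract_nsmul_eq (k m : ℕ) (θ : ℝ) :
    Int.fract ((k * m : ℕ) * θ) = Int.fract ((k : ℝ) * Int.fract (m * θ)) := by
  have : ((k * m : ℕ) : ℝ) * θ = (k : ℝ) * Int.fract (m * θ) + ((k : ℤ) * ⌊(m : ℝ) * θ⌋ : ℤ) := by
    rw [Int.fract]; push_cast; ring
  rw [this, Int.fract_add_intCast]

lemma dense_orbit {θ : ℝ} (hθ : Irrational θ) {z δ : ℝ} (hz0 : 0 ≤ z) (hz1 : z < 1)
    (hδ : 0 < δ) : ∃ m : ℕ, 1 ≤ m ∧ z ≤ Int.fract (m * θ) ∧ Int.fract (m * θ) < z + δ := by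
  set δ' := min δ (1 - z) with hδ'def
  have hδ'0 : 0 < δ' := lt_min hδ (by linarith)
  have hδ'δ : δ' ≤ δ := min_le_left _ _
  have hδ'z : δ' ≤ 1 - z := min_le_right _ _
  obtain ⟨m₀, hm₀, hcase⟩ := exists_small hθ hδ'0
  set α := Int.fract ((m₀ : ℝ) * θ) with hα
  have hm₀θ : Irrational ((m₀ : ℝ) * θ) := by
    have : (m₀ : ℝ) ≠ 0 := Nat.cast_ne_zero.mpr (by omega)
    simpa [mul_comm] using hθ.natCast_mul (by omega : m₀ ≠ 0)
  rcases hcase with hsmall | hbig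
  · -- α ∈ (0, δ')
    obtain ⟨hα0, hαδ⟩ := hsmall
    set k : ℕ := ⌊z / α⌋.toNat + 1 with hk
    have hfl0 : (0:ℤ) ≤ ⌊z / α⌋ := Int.le_floor.mpr (by simpa using div_nonneg hz0 hα0.le)
    have htn : ((⌊z / α⌋.toNat : ℕ) : ℝ) = (⌊z / α⌋ : ℝ) := by
      exact_mod_cast congrArg (fun z : ℤ => (z : ℝ)) (Int.toNat_of_nonneg hfl0)
    have hkcast : (k : ℝ) = (⌊z / α⌋ : ℝ) + 1 := by
      rw [hk]; push_cast; rw [htn]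
    have h1 : z < k * α := by
      have := Int.lt_floor_add_one (z / α)
      rw [hkcast]
      calc z = (z / α) * α := by field_simp
        _ < ((⌊z / α⌋ : ℝ) + 1) * α := by
            apply mul_lt_mul_of_pos_right this hα0
    have h2 : (k : ℝ) * α ≤ z + α := by
      have hfl := Int.floor_le (z / α)
      have : (⌊z / α⌋ : ℝ) * α ≤ z := by
        calc (⌊z / α⌋ : ℝ) * α ≤ (z / α) * α := mul_le_mul_of_nonneg_right hfl (le_of_lt hα0)
          _ = z := by field_simp
      rw [hkcast]; linarith
    have hlt1 : (k : ℝ) * α < 1 := by linarith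
    refine ⟨k * m₀, Nat.one_le_iff_ne_zero.mpr (Nat.mul_ne_zero (by omega) (by omega)), ?_⟩
    rw [fract_nsmul_eq, ← hα, Int.fract_eq_self.mpr ⟨mul_nonneg (Nat.cast_nonneg k) hα0.le, hlt1⟩]
    constructor
    · linarith
    · linarith
  · -- α ∈ (1 - δ', 1)
    obtain ⟨hα1, hα2⟩ := hbig
    set β := 1 - α with hβ
    have hβ0 : 0 < β := by rw [hβ]; linarith
    have hβδ : β < δ' := by rw [hβ]; linarith
    have hβirr : Irrational β := by
      have hαirr : Irrational α := by
        have h' := hm₀θ.sub_intCast ⌊(m₀ : ℝ) * θ⌋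
        rw [hα, Int.fract]
        exact h'
      have h2' := hαirr.intCast_sub 1
      rw [hβ]
      simpa using h2'
    set k : ℕ := ⌊(1 - z) / β⌋.toNat with hk
    have hge1 : (1:ℝ) ≤ (1 - z) / β := by
      rw [le_div_iff₀ hβ0]; linarith
    have hfl1 : (1:ℤ) ≤ ⌊(1 - z) / β⌋ := Int.le_floor.mpr (by simpa using hge1)
    have hk1 : 1 ≤ k := by omega
    have hkcast : (k : ℝ) = (⌊(1 - z) / β⌋ : ℝ) := by
      have h' := Int.toNat_of_nonneg (by omega : (0:ℤ) ≤ ⌊(1 - z) / β⌋)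
      exact_mod_cast congrArg (fun z : ℤ => (z : ℝ)) h'
    have h1 : (k : ℝ) * β ≤ 1 - z := by
      rw [hkcast]
      calc (⌊(1 - z) / β⌋ : ℝ) * β ≤ ((1 - z) / β) * β :=
            mul_le_mul_of_nonneg_right (Int.floor_le _) (le_of_lt hβ0)
        _ = 1 - z := by field_simp
    have h2 : 1 - z - β < (k : ℝ) * β := by
      have h3 : (1 - z) / β < (k : ℝ) + 1 := by rw [hkcast]; exact Int.lt_floor_add_one _
      have h4 : 1 - z < ((k : ℝ) + 1) * β := by
        calc 1 - z = ((1 - z) / β) * β := by field_simp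
          _ < ((k : ℝ) + 1) * β := mul_lt_mul_of_pos_right h3 hβ0
      nlinarith
    have hkR : (0:ℝ) < (k : ℝ) := by exact_mod_cast hk1
    have hkβ0 : 0 < (k : ℝ) * β := mul_pos hkR hβ0
    have hkβirr : Irrational ((k : ℝ) * β) := hβirr.natCast_mul (by omega)
    have hkβ1 : (k : ℝ) * β < 1 := by
      rcases lt_or_eq_of_le (by linarith : (k:ℝ) * β ≤ 1) with h | h
      · exact h
      · exact absurd h (by simpa using hkβirr.ne_int 1)
    refine ⟨k * m₀, Nat.one_le_iff_ne_zero.mpr (Nat.mul_ne_zero (by omega) (by omega)), ?_⟩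
    rw [fract_nsmul_eq, ← hα]
    have e1 : (k : ℝ) * α = -((k : ℝ) * β) + ((k : ℤ) : ℝ) := by rw [hβ]; push_cast; ring
    rw [e1, Int.fract_add_intCast]
    have hfkβ : Int.fract ((k : ℝ) * β) = (k : ℝ) * β :=
      Int.fract_eq_self.mpr ⟨le_of_lt hkβ0, hkβ1⟩
    have hne : Int.fract ((k : ℝ) * β) ≠ 0 := by rw [hfkβ]; exact ne_of_gt hkβ0
    rw [Int.fract_neg hne, hfkβ]
    constructor
    · linarith
    · linarith

end BCAux

namespace BCAux

/-- block set with natural starting indices `m ≥ 1` -/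
def SN (b : ℕ) (θ : ℝ) (n : ℕ) : Set (Fin n → ℕ) :=
  {w | ∃ m : ℕ, 1 ≤ m ∧ ∀ i : Fin n, w i = D b (Int.fract (((m + (i : ℕ) : ℕ) : ℝ) * θ))}

/-- block set with integer starting indices -/
def SZ (b : ℕ) (θ : ℝ) (n : ℕ) : Set (Fin n → ℕ) :=
  {w | ∃ m : ℤ, w = Fblk b θ n ((m : ℝ) * θ)}

lemma SN_eq_SZ {b : ℕ} (hb : 1 < b) {θ : ℝ} (hθ : Irrational θ) (n : ℕ) :
    SN b θ n = SZ b θ n := by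
  ext w
  constructor
  · rintro ⟨m, hm, hw⟩
    refine ⟨(m : ℤ), funext fun i => ?_⟩
    rw [hw i]
    unfold Fblk
    congr 2
    push_cast
    ring
  · rintro ⟨m, rfl⟩
    set t := Int.fract ((m : ℝ) * θ) with ht
    obtain ⟨δ, hδpos, hconst⟩ := Fblk_const hb θ n t
    obtain ⟨m', hm', h1, h2⟩ := dense_orbit hθ (Int.fract_nonneg _) (Int.fract_lt_one _) hδpos
    refine ⟨m', hm', fun i => ?_⟩
    have e1 : Fblk b θ n ((m' : ℝ) * θ) = Fblk b θ n ((m : ℝ) * θ) := by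
      calc Fblk b θ n ((m' : ℝ) * θ) = Fblk b θ n (Int.fract ((m' : ℝ) * θ)) :=
            (Fblk_fract b θ n _).symm
        _ = Fblk b θ n t := hconst _ h1 (by linarith)
        _ = Fblk b θ n ((m : ℝ) * θ) := by rw [ht]; exact Fblk_fract b θ n _
    rw [← e1]
    unfold Fblk
    congr 2
    push_cast
    ring

lemma rev_mem_SZ {b : ℕ} {θ : ℝ} {n : ℕ} {w : Fin n → ℕ} (hw : w ∈ SZ b θ n) :
    (w ∘ Fin.rev) ∈ SZ b (-θ) n := by
  obtain ⟨m, rfl⟩ := hw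
  refine ⟨-(m + n - 1), funext fun i => ?_⟩
  simp only [Function.comp_apply]
  unfold Fblk
  congr 1
  rw [Int.fract_eq_fract]
  refine ⟨0, ?_⟩
  have hval : ((Fin.rev i : ℕ) : ℝ) = (n : ℝ) - 1 - (i : ℕ) := by
    rw [Fin.val_rev]
    have hle : (i : ℕ) + 1 ≤ n := i.2
    push_cast [Nat.cast_sub hle]
    ring
  push_cast
  rw [hval]
  ring

lemma SZ_neg_eq {b : ℕ} {θ : ℝ} (n : ℕ) :
    SZ b (-θ) n = (fun w : Fin n → ℕ => w ∘ Fin.rev) '' SZ b θ n := by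
  ext w
  constructor
  · intro hw
    have h2 := rev_mem_SZ (θ := -θ) hw
    rw [neg_neg] at h2
    exact ⟨w ∘ Fin.rev, h2, funext fun i => by simp [Fin.rev_rev]⟩
  · rintro ⟨v, hv, rfl⟩
    exact rev_mem_SZ hv

lemma ncard_SZ_neg {b : ℕ} {θ : ℝ} (n : ℕ) :
    (SZ b (-θ) n).ncard = (SZ b θ n).ncard := by
  rw [SZ_neg_eq]
  apply Set.ncard_image_of_injective
  have hinv : Function.Involutive (fun w : Fin n → ℕ => w ∘ Fin.rev) :=
    fun w => funext fun i => by simp [Fin.rev_rev]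
  exact hinv.injective

end BCAux

namespace BCAux

lemma logb_irrational {b : ℕ} (hb : 5 ≤ b) (hsf : Squarefree b) {a : ℚ} (ha : 0 < a)
    (hnp : ∀ j : ℤ, (a : ℝ) ≠ (b : ℝ) ^ j) : Irrational (Real.logb b (a : ℝ)) := by
  rintro ⟨x, hx⟩
  have hb0R : (0:ℝ) < b := by
    have : (5:ℝ) ≤ b := by exact_mod_cast hb
    linarith
  have hb1R : (1:ℝ) < b := by
    have : (5:ℝ) ≤ b := by exact_mod_cast hb
    linarith
  have haR : (0:ℝ) < (a : ℝ) := by exact_mod_cast ha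
  have haQ : a ≠ 0 := ne_of_gt ha
  have hbQ : (b : ℚ) ≠ 0 := by
    have : b ≠ 0 := by omega
    exact_mod_cast this
  have hden : x.den ≠ 0 := x.den_nz
  have hab : (b : ℝ) ^ ((x : ℚ) : ℝ) = (a : ℝ) := by
    rw [hx]
    exact Real.rpow_logb hb0R (ne_of_gt hb1R) haR
  have hxden : ((x : ℚ) : ℝ) * (x.den : ℝ) = ((x.num : ℤ) : ℝ) := by
    exact_mod_cast congrArg (fun q : ℚ => (q : ℝ)) (Rat.mul_den_eq_num x)
  have keyR : (a : ℝ) ^ (x.den : ℕ) = (b : ℝ) ^ (x.num : ℤ) := by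
    rw [← hab, ← Real.rpow_natCast ((b:ℝ) ^ ((x:ℚ):ℝ)) x.den, ← Real.rpow_mul hb0R.le,
      hxden, Real.rpow_intCast]
  have keyq : a ^ (x.den : ℕ) = (b : ℚ) ^ (x.num : ℤ) := by
    apply Rat.cast_injective (α := ℝ)
    push_cast
    exact keyR
  -- a prime dividing b
  obtain ⟨r, hr, hrdvd⟩ := Nat.exists_prime_and_dvd (show b ≠ 1 by omega)
  haveI : Fact r.Prime := ⟨hr⟩
  have hb0 : b ≠ 0 := by omega
  have hvalb : padicValNat r b = 1 := by
    have h1 : 1 ≤ padicValNat r b := one_le_padicValNat_of_dvd (by omega) hrdvd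
    have h2 : padicValNat r b ≤ 1 := by
      by_contra hcon
      push_neg at hcon
      have hdvd : r ^ 2 ∣ b := (padicValNat_dvd_iff_le hb0).mpr hcon
      exact hr.not_isUnit (hsf r (by simpa [pow_two] using hdvd))
    omega
  have hvb : padicValRat r (b : ℚ) = 1 := by
    rw [padicValRat.of_nat, hvalb]
    norm_num
  set v : ℤ := padicValRat r a with hv
  have hnum : x.num = (x.den : ℤ) * v := by
    have hkey := congrArg (padicValRat r) keyq
    rw [padicValRat.pow a] at hkey
    rcases Int.natAbs_eq x.num with hsign | hsign
    · rw [hsign, zpow_natCast, padicValRat.pow (b : ℚ), hvb, mul_one] at hkey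
      rw [hsign, ← hkey]
    · rw [hsign, zpow_neg, zpow_natCast, padicValRat.inv,
        padicValRat.pow (b : ℚ), hvb, mul_one] at hkey
      rw [hsign, ← hkey]
  -- conclude a = b ^ v in ℝ
  have h5 : (a : ℝ) ^ (x.den : ℕ) = ((b : ℝ) ^ (v : ℤ)) ^ (x.den : ℕ) := by
    rw [keyR, hnum, mul_comm, zpow_mul, zpow_natCast]
  have hbv : (0:ℝ) ≤ (b : ℝ) ^ (v : ℤ) := by positivity
  have hfin : (a : ℝ) = (b : ℝ) ^ (v : ℤ) :=
    (pow_left_strictMonoOn₀ hden).injOn (Set.mem_setOf_eq ▸ haR.le)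
      (Set.mem_setOf_eq ▸ hbv) h5
  exact hnp v hfin

end BCAux


namespace BCAux

lemma leadingDigit_eq {b : ℕ} (hb : 1 < b) {x : ℝ} (hx : 0 < x) :
    leadingDigit b x = D b (Int.fract (Real.logb b x)) := by
  have hb0 : (0:ℝ) < b := by
    have : (1:ℝ) < b := by exact_mod_cast hb
    linarith
  have hb1 : (1:ℝ) < b := by exact_mod_cast hb
  unfold leadingDigit D
  have e : (b:ℝ) ^ Int.fract (Real.logb b x) = x / (b:ℝ) ^ (⌊Real.logb b x⌋ : ℤ) := by
    rw [Int.fract, Real.rpow_sub hb0, Real.rpow_intCast, Real.rpow_logb hb0 hb1.ne' hx]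
  rw [e]

lemma blockComplexity_eq_SN {b : ℕ} (hb : 1 < b) {c θ : ℝ} (hc : 0 < c)
    (hlog : ∀ k : ℕ, Int.fract (Real.logb b (c ^ k)) = Int.fract ((k : ℝ) * θ)) (n : ℕ) :
    blockComplexity c b n = (SN b θ n).ncard := by
  unfold blockComplexity SN
  congr 1
  ext w
  simp only [Set.mem_setOf_eq]
  have hdig : ∀ k : ℕ, leadingDigit b (c ^ k) = D b (Int.fract ((k : ℝ) * θ)) := by
    intro k
    rw [leadingDigit_eq hb (pow_pos hc k), hlog k]
  constructor
  · rintro ⟨m, hm, h⟩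
    exact ⟨m, hm, fun i => (h i).trans (hdig _)⟩
  · rintro ⟨m, hm, h⟩
    exact ⟨m, hm, fun i => (h i).trans (hdig _).symm⟩

end BCAux

/-- Symmetry: For squarefree `b ≥ 5` and positive rational `a` not an
integral power of `b`, `b/a` is also a positive rational not an integral power of `b`,
and `p_{a,b}(n) = p_{b/a,b}(n)` for all `n ≥ 1`. -/
theorem blockComplexity_symmetry (b : ℕ) (hb : 5 ≤ b) (hsf : Squarefree b)
    (a : ℚ) (ha : 0 < a) (hnp : ∀ j : ℤ, (a : ℝ) ≠ (b : ℝ) ^ j) :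
    0 < (b : ℚ) / a ∧ (∀ j : ℤ, (((b : ℚ) / a : ℚ) : ℝ) ≠ (b : ℝ) ^ j) ∧
      ∀ n : ℕ, 1 ≤ n →
        blockComplexity (a : ℝ) b n = blockComplexity ((((b : ℚ) / a : ℚ)) : ℝ) b n := by
  have hb1 : 1 < b := by omega
  have hb0R : (0:ℝ) < b := by
    have : (5:ℝ) ≤ b := by exact_mod_cast hb
    linarith
  have hb1R : (1:ℝ) < b := by
    have : (5:ℝ) ≤ b := by exact_mod_cast hb
    linarith
  have haR : (0:ℝ) < (a : ℝ) := by exact_mod_cast ha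
  have hbQ0 : (0:ℚ) < (b : ℚ) := by exact_mod_cast (by omega : 0 < b)
  have hpos : (0:ℚ) < (b : ℚ) / a := div_pos hbQ0 ha
  have hcast : (((b : ℚ) / a : ℚ) : ℝ) = (b : ℝ) / (a : ℝ) := by push_cast; ring
  have hposR : (0:ℝ) < (((b : ℚ) / a : ℚ) : ℝ) := by rw [hcast]; positivity
  have hnp2 : ∀ j : ℤ, (((b : ℚ) / a : ℚ) : ℝ) ≠ (b : ℝ) ^ j := by
    intro j hj
    apply hnp (1 - j)
    rw [hcast] at hj
    have hbj : (b:ℝ) ^ j ≠ 0 := zpow_ne_zero _ (ne_of_gt hb0R)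
    have haR' : (a:ℝ) ≠ 0 := ne_of_gt haR
    rw [zpow_sub₀ (ne_of_gt hb0R), zpow_one]
    field_simp at hj ⊢
    linarith [hj]
  refine ⟨hpos, hnp2, ?_⟩
  intro n hn
  set θ := Real.logb b (a : ℝ) with hθdef
  have hθ : Irrational θ := BCAux.logb_irrational hb hsf ha hnp
  have hA : blockComplexity (a : ℝ) b n = (BCAux.SN b θ n).ncard := by
    apply BCAux.blockComplexity_eq_SN hb1 haR
    intro k
    rw [Real.logb_pow]
  have hlogc : Real.logb b (((b : ℚ) / a : ℚ) : ℝ) = 1 - θ := by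
    rw [hcast, Real.logb_div (ne_of_gt hb0R) (ne_of_gt haR),
      Real.logb_self_eq_one hb1R]
  have hB : blockComplexity (((b : ℚ) / a : ℚ) : ℝ) b n = (BCAux.SN b (-θ) n).ncard := by
    apply BCAux.blockComplexity_eq_SN hb1 hposR
    intro k
    rw [Real.logb_pow, hlogc, Int.fract_eq_fract]
    exact ⟨k, by push_cast; ring⟩
  rw [hA, hB, BCAux.SN_eq_SZ hb1 hθ, BCAux.SN_eq_SZ hb1 hθ.neg, BCAux.ncard_SZ_neg]
end

section
/- For every ε > 0 there is a constant C such that for all integers b ≥ 3, the sum over a = 2 to b−1 of (b − ⌊(b−1)/a⌋ − gcd(a,b)) equals b(b−2) + E with |E| ≤ C·b^{1+ε}. Equivalently, the average slope (1/(b−2))·Σ_{a=2}^{b−1} c_{a,b} equals b + O_ε(b^ε). -/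
open Finset Real

/-- Divisor bound: `τ(n) = O_ε(n^ε)`. -/
lemma tau_rpow_bound {ε : ℝ} (hε : 0 < ε) :
    ∃ C : ℝ, 0 ≤ C ∧ ∀ n : ℕ, n ≠ 0 → (n.divisors.card : ℝ) ≤ C * (n : ℝ) ^ ε := by
  have hlog2 : 0 < Real.log 2 := Real.log_pos one_lt_two
  set M : ℝ := 1 + 1 / (ε * Real.log 2) with hMdef
  have hM1 : (1:ℝ) ≤ M := le_add_of_nonneg_right (by positivity)
  set B : ℕ := ⌈(2:ℝ) ^ (1/ε)⌉₊ with hBdef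
  refine ⟨M ^ B, by positivity, ?_⟩
  intro n hn
  have key : ∀ p ∈ n.primeFactors,
      ((n.factorization p + 1 : ℕ) : ℝ) ≤
        (if p < B then M else 1) * (p : ℝ) ^ ((n.factorization p : ℝ) * ε) := by
    intro p hp
    have hp2 : 2 ≤ p := (Nat.prime_of_mem_primeFactors hp).two_le
    set k : ℕ := n.factorization p with hk
    have hp0 : (0:ℝ) ≤ (p:ℝ) := by positivity
    have hkε : (0:ℝ) ≤ (k:ℝ) * ε := by positivity
    by_cases hpB : p < B
    · simp only [hpB, if_pos]
      have h1 : (1:ℝ) + (k:ℝ) * ε * Real.log 2 ≤ (p:ℝ) ^ ((k:ℝ) * ε) := by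
        have h2 : (1:ℝ) + (k:ℝ) * ε * Real.log 2 ≤ (2:ℝ) ^ ((k:ℝ) * ε) := by
          have := Real.add_one_le_exp ((k:ℝ) * ε * Real.log 2)
          rw [Real.rpow_def_of_pos (by norm_num : (0:ℝ) < 2)]
          calc (1:ℝ) + (k:ℝ) * ε * Real.log 2 = (k:ℝ) * ε * Real.log 2 + 1 := by ring
            _ ≤ Real.exp ((k:ℝ) * ε * Real.log 2) := this
            _ = Real.exp (Real.log 2 * ((k:ℝ) * ε)) := by ring_nf
        exact h2.trans (Real.rpow_le_rpow (by norm_num) (by exact_mod_cast hp2) hkε)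
      have hinv : (1 / (ε * Real.log 2)) * (ε * Real.log 2) = 1 := by
        field_simp
      have hεl : 0 < ε * Real.log 2 := by positivity
      have hMx : (k:ℝ) + 1 ≤ M * (1 + (k:ℝ) * ε * Real.log 2) := by
        have hexp : M * (1 + (k:ℝ) * ε * Real.log 2) =
            1 + (k:ℝ) * ε * Real.log 2 + 1 / (ε * Real.log 2) +
              (k:ℝ) * ((1 / (ε * Real.log 2)) * (ε * Real.log 2)) := by
          rw [hMdef]; ring
        rw [hexp, hinv]
        have hknn : (0:ℝ) ≤ (k:ℝ) := Nat.cast_nonneg k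
        have := mul_nonneg hkε hlog2.le
        have : (0:ℝ) ≤ 1 / (ε * Real.log 2) := by positivity
        nlinarith
      push_cast
      calc (k:ℝ) + 1 ≤ M * (1 + (k:ℝ) * ε * Real.log 2) := hMx
        _ ≤ M * (p:ℝ) ^ ((k:ℝ) * ε) :=
            mul_le_mul_of_nonneg_left h1 (le_trans zero_le_one hM1)
    · simp only [hpB, if_neg, not_false_iff, one_mul]
      have hle : (2:ℝ) ^ (1/ε) ≤ (p:ℝ) := by
        have := Nat.ceil_le.mp (le_of_not_gt hpB)
        exact_mod_cast this
      have h2 : (2:ℝ) ≤ (p:ℝ) ^ ε := by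
        have : ((2:ℝ) ^ (1/ε)) ^ ε ≤ (p:ℝ) ^ ε :=
          Real.rpow_le_rpow (by positivity) hle hε.le
        rwa [← Real.rpow_mul (by norm_num), one_div, inv_mul_cancel₀ hε.ne', Real.rpow_one] at this
      rw [show (k:ℝ) * ε = ε * (k:ℝ) by ring, Real.rpow_mul hp0, Real.rpow_natCast]
      have h3 : (2:ℝ) ^ k ≤ ((p:ℝ) ^ ε) ^ k := pow_le_pow_left₀ (by norm_num) h2 k
      have h4 : ((k + 1 : ℕ) : ℝ) ≤ (2:ℝ) ^ k := by
        have := Nat.lt_two_pow_self (n := k)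
        have : (k + 1 : ℕ) ≤ 2 ^ k := this
        exact_mod_cast this
      exact h4.trans (h3.trans_eq rfl)
  have hcard : (n.divisors.card : ℝ) = ∏ p ∈ n.primeFactors, ((n.factorization p + 1 : ℕ) : ℝ) := by
    rw [Nat.card_divisors hn]
    push_cast
    rfl
  have hstep : (n.divisors.card : ℝ) ≤
      (∏ p ∈ n.primeFactors, (if p < B then M else 1)) *
        ∏ p ∈ n.primeFactors, (p : ℝ) ^ ((n.factorization p : ℝ) * ε) := by
    rw [hcard, ← Finset.prod_mul_distrib]
    exact Finset.prod_le_prod (fun p _ => by positivity) key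
  have hprod1 : (∏ p ∈ n.primeFactors, (if p < B then M else 1)) ≤ M ^ B := by
    rw [Finset.prod_ite, Finset.prod_const, Finset.prod_const, one_pow, mul_one]
    have hc : (n.primeFactors.filter (· < B)).card ≤ B := by
      have : n.primeFactors.filter (· < B) ⊆ Finset.range B := fun x hx =>
        Finset.mem_range.mpr (Finset.mem_filter.mp hx).2
      simpa using Finset.card_le_card this
    exact pow_le_pow_right₀ hM1 hc
  have hprod2 : (∏ p ∈ n.primeFactors, (p : ℝ) ^ ((n.factorization p : ℝ) * ε)) = (n : ℝ) ^ ε := by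
    have h1 : ∀ p ∈ n.primeFactors,
        (p : ℝ) ^ ((n.factorization p : ℝ) * ε) = (((p ^ n.factorization p : ℕ) : ℝ)) ^ ε := by
      intro p _
      rw [Real.rpow_mul (by positivity), Real.rpow_natCast]
      push_cast
      ring
    rw [Finset.prod_congr rfl h1, Real.finset_prod_rpow _ _ (fun p _ => by positivity)]
    congr 1
    have : (∏ p ∈ n.primeFactors, p ^ n.factorization p) = n := by
      rw [← Nat.support_factorization]
      exact Nat.factorization_prod_pow_eq_self hn
    exact_mod_cast this
  calc (n.divisors.card : ℝ) ≤ _ := hstep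
    _ ≤ M ^ B * (n : ℝ) ^ ε := by
        rw [hprod2]
        exact mul_le_mul_of_nonneg_right hprod1 (by positivity)

/-- gcd-sum bound: `∑_{a=2}^{b-1} gcd(a,b) ≤ τ(b)·b`. -/
lemma gcd_sum_le {b : ℕ} (hb : b ≠ 0) :
    (∑ a ∈ Ico 2 b, Nat.gcd a b) ≤ b.divisors.card * b := by
  have hmaps : ∀ a ∈ Ico 2 b, Nat.gcd a b ∈ b.divisors := fun a _ =>
    Nat.mem_divisors.mpr ⟨Nat.gcd_dvd_right a b, hb⟩
  rw [← Finset.sum_fiberwise_of_maps_to hmaps]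
  calc (∑ d ∈ b.divisors, ∑ a ∈ Ico 2 b with Nat.gcd a b = d, Nat.gcd a b)
      ≤ ∑ _d ∈ b.divisors, b := by
        refine Finset.sum_le_sum fun d _ => ?_
        have heq : ∀ a ∈ (Ico 2 b).filter (fun a => Nat.gcd a b = d), Nat.gcd a b = d :=
          fun a ha => (Finset.mem_filter.mp ha).2
        rw [Finset.sum_congr rfl heq, Finset.sum_const, smul_eq_mul]
        have hsub : (Ico 2 b).filter (fun a => Nat.gcd a b = d) ⊆
            (Ioc 0 (b-1)).filter (d ∣ ·) := by
          intro a ha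
          obtain ⟨ha1, ha2⟩ := Finset.mem_filter.mp ha
          obtain ⟨h2a, hab⟩ := Finset.mem_Ico.mp ha1
          exact Finset.mem_filter.mpr ⟨Finset.mem_Ioc.mpr ⟨by omega, by omega⟩,
            ha2 ▸ Nat.gcd_dvd_left a b⟩
        have hc := Finset.card_le_card hsub
        rw [Nat.Ioc_filter_dvd_card_eq_div] at hc
        calc ((Ico 2 b).filter (fun a => Nat.gcd a b = d)).card * d
            ≤ ((b-1)/d) * d := Nat.mul_le_mul_right _ hc
          _ ≤ b - 1 := Nat.div_mul_le_self _ _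
          _ ≤ b := by omega
    _ = b.divisors.card * b := by rw [Finset.sum_const, smul_eq_mul]

/-- harmonic-type bound for the floor sum. -/
lemma floor_sum_le {b : ℕ} (hb : 3 ≤ b) :
    (∑ a ∈ Ico 2 b, (((b - 1) / a : ℕ) : ℝ)) ≤ (b : ℝ) * (1 + Real.log b) := by
  have hbR : (1:ℝ) ≤ (b:ℝ) := by exact_mod_cast (by omega : 1 ≤ b)
  have h1 : ∀ a ∈ Ico 2 b, (((b - 1) / a : ℕ) : ℝ) ≤ (b:ℝ) * (a:ℝ)⁻¹ := by
    intro a ha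
    have h2a : 2 ≤ a := (Finset.mem_Ico.mp ha).1
    have haR : (0:ℝ) < (a:ℝ) := by exact_mod_cast (by omega : 0 < a)
    calc (((b - 1) / a : ℕ) : ℝ) ≤ ((b - 1 : ℕ) : ℝ) / (a : ℝ) := Nat.cast_div_le
      _ ≤ (b : ℝ) / (a : ℝ) := by
          gcongr
          exact_mod_cast Nat.sub_le b 1
      _ = (b:ℝ) * (a:ℝ)⁻¹ := div_eq_mul_inv _ _
  calc (∑ a ∈ Ico 2 b, (((b - 1) / a : ℕ) : ℝ))
      ≤ ∑ a ∈ Ico 2 b, (b:ℝ) * (a:ℝ)⁻¹ := Finset.sum_le_sum h1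
    _ = (b:ℝ) * ∑ a ∈ Ico 2 b, (a:ℝ)⁻¹ := by rw [← Finset.mul_sum]
    _ ≤ (b:ℝ) * (1 + Real.log b) := by
        refine mul_le_mul_of_nonneg_left ?_ (by positivity)
        have hsub : Ico 2 b ⊆ Icc 1 (b-1) := by
          intro a ha
          obtain ⟨h1a, h2a⟩ := Finset.mem_Ico.mp ha
          exact Finset.mem_Icc.mpr ⟨by omega, by omega⟩
        calc (∑ a ∈ Ico 2 b, (a:ℝ)⁻¹)
            ≤ ∑ a ∈ Icc 1 (b-1), (a:ℝ)⁻¹ :=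
              Finset.sum_le_sum_of_subset_of_nonneg hsub (fun i _ _ => by positivity)
          _ = ((harmonic (b-1) : ℚ) : ℝ) := by
              rw [harmonic_eq_sum_Icc]; push_cast; rfl
          _ ≤ 1 + Real.log ((b-1 : ℕ) : ℝ) := harmonic_le_one_add_log (b-1)
          _ ≤ 1 + Real.log b := by
              have hle : ((b-1:ℕ):ℝ) ≤ (b:ℝ) := by exact_mod_cast Nat.sub_le b 1
              have h0 : (0:ℝ) < ((b-1:ℕ):ℝ) := by exact_mod_cast (by omega : 0 < b - 1)
              linarith [Real.log_le_log h0 hle]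

/-- For every `ε > 0` there is a constant `C` such that for all `b ≥ 3`,
`∑_{a=2}^{b-1} (b - ⌊(b-1)/a⌋ - gcd(a,b)) = b(b-2) + E` with `|E| ≤ C·b^{1+ε}`;
i.e. the average slope is `b + O_ε(b^ε)`. -/
theorem average_slope (ε : ℝ) (hε : 0 < ε) :
    ∃ C : ℝ, ∀ b : ℕ, 3 ≤ b →
      |(∑ a ∈ Finset.Ico 2 b,
          ((b : ℝ) - (((b - 1) / a : ℕ) : ℝ) - (Nat.gcd a b : ℝ))) -
        (b : ℝ) * ((b : ℝ) - 2)| ≤ C * (b : ℝ) ^ ((1 : ℝ) + ε) := by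
  obtain ⟨Cτ, hCτ0, hCτ⟩ := tau_rpow_bound hε
  refine ⟨1 + 1/ε + Cτ, fun b hb => ?_⟩
  have hb0 : (0:ℝ) < (b:ℝ) := by exact_mod_cast (by omega : 0 < b)
  have hb1 : (1:ℝ) ≤ (b:ℝ) := by exact_mod_cast (by omega : 1 ≤ b)
  set S1 : ℝ := ∑ a ∈ Ico 2 b, (((b - 1) / a : ℕ) : ℝ) with hS1
  set S2 : ℝ := ∑ a ∈ Ico 2 b, (Nat.gcd a b : ℝ) with hS2
  have hsum : (∑ a ∈ Finset.Ico 2 b,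
      ((b : ℝ) - (((b - 1) / a : ℕ) : ℝ) - (Nat.gcd a b : ℝ))) =
      (b:ℝ) * ((b:ℝ) - 2) - S1 - S2 := by
    rw [hS1, hS2]
    rw [Finset.sum_sub_distrib, Finset.sum_sub_distrib, Finset.sum_const, Nat.card_Ico,
      nsmul_eq_mul, Nat.cast_sub (by omega : 2 ≤ b)]
    push_cast
    ring
  rw [hsum]
  have hS1nn : 0 ≤ S1 := Finset.sum_nonneg fun a _ => by positivity
  have hS2nn : 0 ≤ S2 := Finset.sum_nonneg fun a _ => by positivity
  have habs : |(b:ℝ) * ((b:ℝ) - 2) - S1 - S2 - (b:ℝ) * ((b:ℝ) - 2)| = S1 + S2 := by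
    rw [show (b:ℝ) * ((b:ℝ) - 2) - S1 - S2 - (b:ℝ) * ((b:ℝ) - 2) = -(S1 + S2) by ring,
      abs_neg, abs_of_nonneg (by linarith)]
  rw [habs]
  have hS1b : S1 ≤ (b:ℝ) * (1 + Real.log b) := floor_sum_le hb
  have hlog : Real.log b ≤ (b:ℝ)^ε / ε := Real.log_le_rpow_div hb0.le hε
  have hS2b : S2 ≤ Cτ * (b:ℝ)^ε * (b:ℝ) := by
    have hnat := gcd_sum_le (show b ≠ 0 by omega)
    have hcast : S2 = ((∑ a ∈ Ico 2 b, Nat.gcd a b : ℕ) : ℝ) := by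
      rw [hS2]; push_cast; rfl
    calc S2 = ((∑ a ∈ Ico 2 b, Nat.gcd a b : ℕ) : ℝ) := hcast
      _ ≤ ((b.divisors.card * b : ℕ) : ℝ) := by exact_mod_cast hnat
      _ = (b.divisors.card : ℝ) * (b:ℝ) := by push_cast; ring
      _ ≤ Cτ * (b:ℝ)^ε * (b:ℝ) :=
          mul_le_mul_of_nonneg_right (hCτ b (by omega)) hb0.le
  have hpow : (b:ℝ)^((1:ℝ)+ε) = (b:ℝ) * (b:ℝ)^ε := by
    rw [Real.rpow_add hb0, Real.rpow_one]
  have hble : (b:ℝ) ≤ (b:ℝ)^((1:ℝ)+ε) := by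
    calc (b:ℝ) = (b:ℝ)^(1:ℝ) := (Real.rpow_one _).symm
      _ ≤ _ := Real.rpow_le_rpow_of_exponent_le hb1 (by linarith)
  have h1 : (b:ℝ) * ((b:ℝ)^ε / ε) = (b:ℝ)^((1:ℝ)+ε) * (1/ε) := by rw [hpow]; ring
  have h2 : Cτ * (b:ℝ)^ε * (b:ℝ) = Cτ * (b:ℝ)^((1:ℝ)+ε) := by rw [hpow]; ring
  have h3 : (b:ℝ) * Real.log b ≤ (b:ℝ) * ((b:ℝ)^ε / ε) :=
    mul_le_mul_of_nonneg_left hlog hb0.le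
  have h4 : (1 + 1/ε + Cτ) * (b:ℝ)^((1:ℝ)+ε) =
      (b:ℝ)^((1:ℝ)+ε) + (b:ℝ)^((1:ℝ)+ε) * (1/ε) + Cτ * (b:ℝ)^((1:ℝ)+ε) := by ring
  nlinarith [hS1b, hS2b, hble, h1, h2, h3, h4]
end
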